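/- For every D ∈ (0, D_max), (ln 2)·R(D) = sup_{λ ≤ 0} [λ·D − Γ(λ)], where Γ(λ) := sup_Q Λ_{P,Q}(λ), the supremum taken over all probability mass functions Q on Â. -/

import Mathlib

open Real MeasureTheory Finset
open scoped Classical

/-- `Q` is a probability mass function on `Fin k`. -/
def IsPmf {k : ℕ} (Q : Fin k → ℝ) : Prop := (∀ j, 0 ≤ Q j) ∧ ∑ j, Q j = 1

/-- `Λ_{P,Q}(λ) = E_P[ln Σ_j Q_j e^{λ ρ(X,a_j)}]`. -/
noncomputable def Lam {k : ℕ} (P : Measure ℝ) (ρ : ℝ → Fin k → ℝ)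
    (Q : Fin k → ℝ) (l : ℝ) : ℝ :=
  ∫ x, Real.log (∑ j, Q j * Real.exp (l * ρ x j)) ∂P

/-- The cost `∫ Σ_j W(x)({a_j}) log₂ (W(x)({a_j}) / Q_j) dP(x)` of a Markov kernel,
with the conventions `0 · log 0 = 0` (automatic in Lean) and value `⊤` if on a set of
positive `P`-measure `w x j > 0` for some `j` with `Q j = 0`. -/
noncomputable def wCost {k : ℕ} (P : Measure ℝ) (Q : Fin k → ℝ)
    (w : ℝ → Fin k → ℝ) : EReal :=
  if ∀ᵐ x ∂P, ∀ j, 0 < w x j → 0 < Q j then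
    ((∫ x, ∑ j, w x j * Real.logb 2 (w x j / Q j) ∂P : ℝ) : EReal)
  else ⊤

/-- `R(P,Q,D)`: infimum over Markov kernels `w` from `ℝ` to `Fin k` with
`∫ Σ_j w x j ρ(x,a_j) dP ≤ D` of the relative-entropy cost. -/
noncomputable def RPQ {k : ℕ} (P : Measure ℝ) (ρ : ℝ → Fin k → ℝ)
    (Q : Fin k → ℝ) (D : ℝ) : EReal :=
  ⨅ w ∈ {w : ℝ → Fin k → ℝ | Measurable w ∧ (∀ x j, 0 ≤ w x j) ∧
      (∀ x, ∑ j, w x j = 1) ∧ ∫ x, ∑ j, w x j * ρ x j ∂P ≤ D}, wCost P Q w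

/-- The rate-distortion function `R(D) = inf_Q R(P,Q,D)`. -/
noncomputable def RofD {k : ℕ} (P : Measure ℝ) (ρ : ℝ → Fin k → ℝ) (D : ℝ) : EReal :=
  ⨅ Q ∈ {Q : Fin k → ℝ | IsPmf Q}, RPQ P ρ Q D

/-- `D_max = min_j E_P[ρ(X,a_j)]`. -/
noncomputable def Dmax {k : ℕ} (P : Measure ℝ) (ρ : ℝ → Fin k → ℝ) : ℝ :=
  sInf (Set.range fun j => ∫ x, ρ x j ∂P)

/-- `D_min^{P,Q} = E_P[min_{a ∈ supp Q} ρ(X,a)]`. -/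
noncomputable def DminPQ {k : ℕ} (P : Measure ℝ) (ρ : ℝ → Fin k → ℝ)
    (Q : Fin k → ℝ) : ℝ :=
  ∫ x, (⨅ j : {j : Fin k // 0 < Q j}, ρ x (j : Fin k)) ∂P

/-- `D_max^{P,Q} = Σ_j Q_j · E_P[ρ(X,a_j)]`. -/
noncomputable def DmaxPQ {k : ℕ} (P : Measure ℝ) (ρ : ℝ → Fin k → ℝ)
    (Q : Fin k → ℝ) : ℝ :=
  ∑ j, Q j * ∫ x, ρ x j ∂P

/-- The Fenchel–Legendre transform `Λ*_{P,Q}(D) = sup_{λ ≤ 0} [λ·D − Λ_{P,Q}(λ)]`. -/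
noncomputable def LamStar {k : ℕ} (P : Measure ℝ) (ρ : ℝ → Fin k → ℝ)
    (Q : Fin k → ℝ) (D : ℝ) : EReal :=
  ⨆ l ∈ Set.Iic (0 : ℝ), ((l * D - Lam P ρ Q l : ℝ) : EReal)

/-- `Γ(λ) = sup_Q Λ_{P,Q}(λ)`, the supremum over all pmfs `Q` on the reproduction
alphabet. -/
noncomputable def Gamma {k : ℕ} (P : Measure ℝ) (ρ : ℝ → Fin k → ℝ) (l : ℝ) : ℝ :=
  sSup {y : ℝ | ∃ Q : Fin k → ℝ, IsPmf Q ∧ y = Lam P ρ Q l}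

lemma exp_lip {u v : ℝ} (hu : u ≤ 0) (hv : v ≤ 0) : |Real.exp u - Real.exp v| ≤ |u - v| := by
  wlog h : v ≤ u generalizing u v
  · rw [abs_sub_comm, abs_sub_comm u v]; exact this hv hu (le_of_not_ge h)
  have h1 := Real.add_one_le_exp (v - u)
  have h2 : Real.exp u ≤ 1 := Real.exp_le_one_iff.2 hu  -- name?
  have h3 : Real.exp v ≤ Real.exp u := Real.exp_le_exp.2 h
  have h4 : Real.exp u * Real.exp (v - u) = Real.exp v := by rw [← Real.exp_add]; ring_nf
  have h5 := Real.exp_pos u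
  rw [abs_of_nonneg (by linarith), abs_of_nonneg (by linarith)]
  nlinarith

lemma log_diff {a b c : ℝ} (hc : 0 < c) (ha : c ≤ a) (hb : c ≤ b) :
    |Real.log a - Real.log b| ≤ |a - b| / c := by
  wlog h : b ≤ a generalizing a b
  · rw [abs_sub_comm, abs_sub_comm a b]; exact this hb ha (le_of_not_ge h)
  have ha0 : 0 < a := lt_of_lt_of_le hc ha
  have hb0 : 0 < b := lt_of_lt_of_le hc hb
  have h1 : Real.log a - Real.log b = Real.log (a / b) := (Real.log_div ha0.ne' hb0.ne').symm
  have h2 : Real.log (a / b) ≤ a / b - 1 := Real.log_le_sub_one_of_pos (by positivity)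
  have h3 : a / b - 1 = (a - b) / b := by field_simp
  have h4 : (a - b) / b ≤ (a - b) / c := by
    apply div_le_div_of_nonneg_left ?_ hc hb <;> linarith
  have h5 : 0 ≤ Real.log a - Real.log b := by
    simp only [sub_nonneg]; exact Real.log_le_log hb0 h
  rw [abs_of_nonneg h5, abs_of_nonneg (by linarith)]
  linarith

lemma ratio_diff {u v u' v' c m : ℝ} (hc : 0 < c) (hv : c ≤ v) (hv' : c ≤ v')
    (hu' : |u'| ≤ m) : |u / v - u' / v'| ≤ |u - u'| / c + m * |v - v'| / c ^ 2 := by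
  have hv0 : 0 < v := lt_of_lt_of_le hc hv
  have hv'0 : 0 < v' := lt_of_lt_of_le hc hv'
  have key : u / v - u' / v' = (u - u') / v + u' * (v' - v) / (v * v') := by
    field_simp; ring
  rw [key]
  have h1 : |(u - u') / v| ≤ |u - u'| / c := by
    rw [abs_div, abs_of_pos hv0]
    exact div_le_div_of_nonneg_left (abs_nonneg _) hc hv
  have h2 : |u' * (v' - v) / (v * v')| ≤ m * |v - v'| / c ^ 2 := by
    rw [abs_div, abs_mul, abs_of_pos (mul_pos hv0 hv'0)]
    have hm : 0 ≤ m := le_trans (abs_nonneg _) hu'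
    have : c ^ 2 ≤ v * v' := by nlinarith
    calc |u'| * |v' - v| / (v * v') ≤ m * |v - v'| / (v * v') := by
          rw [abs_sub_comm v' v]; gcongr
      _ ≤ m * |v - v'| / c ^ 2 := by gcongr <;> positivity
  calc |(u - u') / v + u' * (v' - v) / (v * v')| ≤ _ + _ := abs_add_le _ _
    _ ≤ _ := add_le_add h1 h2

lemma integrable_of_boundOn {α : Type*} [MeasurableSpace α] (P : Measure α)
    [IsFiniteMeasure P] (A : Set α) (hae : ∀ᵐ x ∂P, x ∈ A) {g : α → ℝ}
    (hg : AEStronglyMeasurable g P) (C : ℝ) (hb : ∀ x ∈ A, |g x| ≤ C) :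
    Integrable g P :=
  Integrable.mono' (integrable_const C) hg (hae.mono fun x hx => by
    simpa [Real.norm_eq_abs] using hb x hx)

lemma gibbs {k : ℕ} (w q : Fin k → ℝ) (hw0 : ∀ j, 0 ≤ w j) (hw1 : ∑ j, w j = 1)
    (hq0 : ∀ j, 0 ≤ q j) (hqs : ∀ j, 0 < w j → 0 < q j) :
    - Real.log (∑ j, q j) ≤ ∑ j, w j * Real.log (w j / q j) := by
  set T : Finset (Fin k) := Finset.univ.filter (fun j => 0 < w j) with hT
  have hwT : ∀ j ∈ T, 0 < w j := fun j hj => (Finset.mem_filter.1 hj).2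
  have hqT : ∀ j ∈ T, 0 < q j := fun j hj => hqs j (hwT j hj)
  have hTsum : ∑ j ∈ T, w j = 1 := by
    rw [← hw1]
    exact Finset.sum_filter_of_ne (fun j _ h => lt_of_le_of_ne (hw0 j) (Ne.symm h))
  have hTne : T.Nonempty := by
    by_contra h
    rw [Finset.not_nonempty_iff_eq_empty] at h
    rw [h, Finset.sum_empty] at hTsum; norm_num at hTsum
  have hsum_eq : ∑ j, w j * Real.log (w j / q j) = ∑ j ∈ T, w j * Real.log (w j / q j) := by
    refine (Finset.sum_filter_of_ne (fun j _ h => ?_)).symm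
    by_contra hj
    have : w j = 0 := le_antisymm (le_of_not_gt hj) (hw0 j)
    rw [this] at h; simp at h
  -- Jensen
  have jensen : ∑ j ∈ T, w j • Real.log (q j / w j)
      ≤ Real.log (∑ j ∈ T, w j • (q j / w j)) := by
    refine (strictConcaveOn_log_Ioi.concaveOn).le_map_sum (fun j hj => (hw0 j)) hTsum
      (fun j hj => ?_)
    exact Set.mem_Ioi.2 (div_pos (hqT j hj) (hwT j hj))
  have hsum2 : ∑ j ∈ T, w j • (q j / w j) = ∑ j ∈ T, q j := by
    apply Finset.sum_congr rfl
    intro j hj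
    rw [smul_eq_mul, mul_div_cancel₀ _ (hwT j hj).ne']
  have hlogmono : Real.log (∑ j ∈ T, q j) ≤ Real.log (∑ j, q j) := by
    apply Real.log_le_log (Finset.sum_pos hqT hTne)
    exact Finset.sum_le_sum_of_subset_of_nonneg (Finset.subset_univ T)
      (fun j _ _ => hq0 j)
  have hneg : ∀ j ∈ T, w j * Real.log (w j / q j) = - (w j • Real.log (q j / w j)) := by
    intro j hj
    rw [smul_eq_mul, ← mul_neg, ← Real.log_inv, inv_div]
  rw [hsum_eq, Finset.sum_congr rfl hneg, Finset.sum_neg_distrib]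
  rw [hsum2] at jensen
  have := le_trans jensen hlogmono
  linarith
noncomputable def Zf {k : ℕ} (ρ : ℝ → Fin k → ℝ) (Q : Fin k → ℝ) (l : ℝ) (x : ℝ) : ℝ :=
  ∑ j, Q j * Real.exp (l * ρ x j)

noncomputable def psiF {k : ℕ} (ρ : ℝ → Fin k → ℝ) (Q : Fin k → ℝ) (l : ℝ) (x : ℝ) : ℝ :=
  (∑ j, Q j * (Real.exp (l * ρ x j) * ρ x j)) / Zf ρ Q l x

noncomputable def PhiF {k : ℕ} (P : MeasureTheory.Measure ℝ) (ρ : ℝ → Fin k → ℝ)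
    (Q : Fin k → ℝ) (l : ℝ) : ℝ :=
  ∫ x, psiF ρ Q l x ∂P

section Main

variable {k : ℕ} {A : Set ℝ} {P : MeasureTheory.Measure ℝ} {M : ℝ}
  {ρ : ℝ → Fin k → ℝ} {Q Q' : Fin k → ℝ} {l l' a x : ℝ}

lemma IsPmf.exists_pos (hQ : IsPmf Q) : ∃ j, 0 < Q j := by
  by_contra h
  push_neg at h
  have : ∑ j, Q j ≤ 0 := Finset.sum_nonpos (fun j _ => h j)
  rw [hQ.2] at this; norm_num at this

lemma Zf_pos (hQ : IsPmf Q) : 0 < Zf ρ Q l x := by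
  obtain ⟨j0, hj0⟩ := hQ.exists_pos
  exact Finset.sum_pos' (fun j _ => mul_nonneg (hQ.1 j) (Real.exp_pos _).le)
    ⟨j0, Finset.mem_univ _, mul_pos hj0 (Real.exp_pos _)⟩

lemma Zf_le_one (hQ : IsPmf Q) (hl : l ≤ 0) (hx : x ∈ A)
    (hρnn : ∀ x ∈ A, ∀ j, 0 ≤ ρ x j) : Zf ρ Q l x ≤ 1 := by
  rw [← hQ.2]
  refine Finset.sum_le_sum (fun j _ => ?_)
  have : Real.exp (l * ρ x j) ≤ 1 := by
    rw [← Real.exp_zero]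
    exact Real.exp_le_exp.2 (mul_nonpos_of_nonpos_of_nonneg hl (hρnn x hx j))
  nlinarith [hQ.1 j, (Real.exp_pos (l * ρ x j)).le]

lemma exp_le_Zf (hQ : IsPmf Q) (hl : l ≤ 0) (hx : x ∈ A)
    (hρM : ∀ x ∈ A, ∀ j, ρ x j ≤ M) : Real.exp (l * M) ≤ Zf ρ Q l x := by
  have : Real.exp (l * M) = ∑ j, Q j * Real.exp (l * M) := by
    rw [← Finset.sum_mul, hQ.2, one_mul]
  rw [this]
  refine Finset.sum_le_sum (fun j _ => ?_)
  have : Real.exp (l * M) ≤ Real.exp (l * ρ x j) :=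
    Real.exp_le_exp.2 (mul_le_mul_of_nonpos_left (hρM x hx j) hl)
  nlinarith [hQ.1 j]

lemma logZf_nonpos (hQ : IsPmf Q) (hl : l ≤ 0) (hx : x ∈ A)
    (hρnn : ∀ x ∈ A, ∀ j, 0 ≤ ρ x j) : Real.log (Zf ρ Q l x) ≤ 0 :=
  Real.log_nonpos (Zf_pos hQ).le (Zf_le_one hQ hl hx hρnn)

lemma le_logZf (hQ : IsPmf Q) (hl : l ≤ 0) (hx : x ∈ A)
    (hρM : ∀ x ∈ A, ∀ j, ρ x j ≤ M) : l * M ≤ Real.log (Zf ρ Q l x) := by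
  have := Real.log_le_log (Real.exp_pos (l * M)) (exp_le_Zf hQ hl hx hρM)
  rwa [Real.log_exp] at this

lemma abs_logZf_le (hQ : IsPmf Q) (hl : l ≤ 0) (hx : x ∈ A)
    (hρnn : ∀ x ∈ A, ∀ j, 0 ≤ ρ x j) (hρM : ∀ x ∈ A, ∀ j, ρ x j ≤ M) :
    |Real.log (Zf ρ Q l x)| ≤ |l| * M := by
  rw [abs_le]
  have h1 := le_logZf hQ hl hx hρM
  have h2 := logZf_nonpos hQ hl hx hρnn
  have hM : 0 ≤ M := le_trans (hρnn x hx ⟨0, by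
    rcases Nat.eq_zero_or_pos k with h | h
    · exact absurd (hQ.2) (by subst h; simp)
    · exact h⟩) (hρM x hx _)
  constructor
  · calc -(|l| * M) = l * M := by rw [abs_of_nonpos hl]; ring
      _ ≤ _ := h1
  · calc Real.log (Zf ρ Q l x) ≤ 0 := h2
      _ ≤ |l| * M := by positivity

lemma measurable_Zf (hρmeas : ∀ j, Measurable fun x => ρ x j) :
    Measurable (Zf ρ Q l) := by
  apply Finset.measurable_sum
  intro j _
  exact (Real.measurable_exp.comp ((hρmeas j).const_mul l)).const_mul (Q j)

lemma measurable_logZf (hρmeas : ∀ j, Measurable fun x => ρ x j) :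
    Measurable (fun x => Real.log (Zf ρ Q l x)) :=
  Real.measurable_log.comp (measurable_Zf hρmeas)

lemma measurable_psiF (hρmeas : ∀ j, Measurable fun x => ρ x j) :
    Measurable (psiF ρ Q l) := by
  apply Measurable.div ?_ (measurable_Zf hρmeas)
  apply Finset.measurable_sum
  intro j _
  exact ((Real.measurable_exp.comp ((hρmeas j).const_mul l)).mul (hρmeas j)).const_mul (Q j)

lemma psiF_nonneg (hQ : IsPmf Q) (hx : x ∈ A) (hρnn : ∀ x ∈ A, ∀ j, 0 ≤ ρ x j) :
    0 ≤ psiF ρ Q l x := by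
  apply div_nonneg ?_ (Zf_pos hQ).le
  exact Finset.sum_nonneg (fun j _ => mul_nonneg (hQ.1 j)
    (mul_nonneg (Real.exp_pos _).le (hρnn x hx j)))

lemma psiF_le (hQ : IsPmf Q) (hx : x ∈ A) (hρnn : ∀ x ∈ A, ∀ j, 0 ≤ ρ x j)
    (hρM : ∀ x ∈ A, ∀ j, ρ x j ≤ M) : psiF ρ Q l x ≤ M := by
  rw [psiF, div_le_iff₀ (Zf_pos hQ)]
  unfold Zf
  rw [Finset.mul_sum]
  refine Finset.sum_le_sum (fun j _ => ?_)
  have h1 := hQ.1 j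
  have h2 := (Real.exp_pos (l * ρ x j)).le
  have h3 := hρM x hx j
  have h4 := hρnn x hx j
  nlinarith [mul_nonneg h1 h2, mul_le_mul_of_nonneg_left h3 (mul_nonneg h1 h2)]


variable [MeasureTheory.IsProbabilityMeasure P]

lemma abs_integral_le' {h : ℝ → ℝ} (hint : Integrable h P) {C : ℝ}
    (hb : ∀ᵐ x ∂P, |h x| ≤ C) : |∫ x, h x ∂P| ≤ C := by
  have h1 : ∫ x, h x ∂P ≤ C := by
    have := integral_mono_ae hint (integrable_const C) (hb.mono fun x hx => (abs_le.1 hx).2)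
    simpa using this
  have h2 : -C ≤ ∫ x, h x ∂P := by
    have := integral_mono_ae (integrable_const (-C)) hint (hb.mono fun x hx => (abs_le.1 hx).1)
    simpa using this
  rw [abs_le]; exact ⟨h2, h1⟩

lemma integrable_logZf (hae : ∀ᵐ x ∂P, x ∈ A)
    (hρmeas : ∀ j, Measurable fun x => ρ x j)
    (hρnn : ∀ x ∈ A, ∀ j, 0 ≤ ρ x j) (hρM : ∀ x ∈ A, ∀ j, ρ x j ≤ M)
    (hQ : IsPmf Q) (hl : l ≤ 0) :
    Integrable (fun x => Real.log (Zf ρ Q l x)) P :=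
  integrable_of_boundOn P A hae (measurable_logZf hρmeas).aestronglyMeasurable
    (|l| * M) (fun x hx => abs_logZf_le hQ hl hx hρnn hρM)

lemma integrable_psiF (hae : ∀ᵐ x ∂P, x ∈ A)
    (hρmeas : ∀ j, Measurable fun x => ρ x j)
    (hρnn : ∀ x ∈ A, ∀ j, 0 ≤ ρ x j) (hρM : ∀ x ∈ A, ∀ j, ρ x j ≤ M)
    (hQ : IsPmf Q) :
    Integrable (psiF ρ Q l) P := by
  refine integrable_of_boundOn P A hae (measurable_psiF hρmeas).aestronglyMeasurable
    M (fun x hx => ?_)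
  rw [abs_of_nonneg (psiF_nonneg hQ hx hρnn)]
  exact psiF_le hQ hx hρnn hρM

lemma Lam_eq : Lam P ρ Q l = ∫ x, Real.log (Zf ρ Q l x) ∂P := rfl

lemma hasDerivAt_logZf (hQ : IsPmf Q) :
    HasDerivAt (fun t => Real.log (Zf ρ Q t x)) (psiF ρ Q l x) l := by
  have hZ : HasDerivAt (fun t => Zf ρ Q t x)
      (∑ j, Q j * (Real.exp (l * ρ x j) * ρ x j)) l := by
    apply HasDerivAt.fun_sum
    intro j _
    exact ((hasDerivAt_mul_const (ρ x j)).exp).const_mul (Q j)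
  exact hZ.log (Zf_pos hQ).ne'

lemma hasDerivAt_Lam (hae : ∀ᵐ x ∂P, x ∈ A)
    (hρmeas : ∀ j, Measurable fun x => ρ x j)
    (hρnn : ∀ x ∈ A, ∀ j, 0 ≤ ρ x j) (hρM : ∀ x ∈ A, ∀ j, ρ x j ≤ M)
    (hQ : IsPmf Q) (hl : l ≤ 0) :
    HasDerivAt (fun t => Lam P ρ Q t) (PhiF P ρ Q l) l := by
  have key := hasDerivAt_integral_of_dominated_loc_of_lip
    (F := fun t x => Real.log (Zf ρ Q t x)) (F' := psiF ρ Q l) (x₀ := l)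
    (bound := fun _ => M) (Metric.ball_mem_nhds l one_pos)
    (Filter.Eventually.of_forall fun t => (measurable_logZf hρmeas).aestronglyMeasurable)
    (integrable_logZf hae hρmeas hρnn hρM hQ hl)
    (measurable_psiF hρmeas).aestronglyMeasurable
    (hae.mono fun x hx => ?_)
    (integrable_const M)
    (Filter.Eventually.of_forall fun x => hasDerivAt_logZf hQ)
  · exact key.2
  · refine Convex.lipschitzOnWith_of_nnnorm_hasDerivWithin_le (convex_ball l 1)
      (f' := fun t => psiF ρ Q t x)
      (fun t _ => (hasDerivAt_logZf hQ).hasDerivWithinAt) (fun t _ => ?_)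
    rw [← NNReal.coe_le_coe, coe_nnnorm, Real.coe_nnabs, Real.norm_eq_abs,
      abs_of_nonneg (psiF_nonneg hQ hx hρnn)]
    exact le_trans (psiF_le hQ hx hρnn hρM) (le_abs_self M)

lemma exists_slope (hae : ∀ᵐ x ∂P, x ∈ A)
    (hρmeas : ∀ j, Measurable fun x => ρ x j)
    (hρnn : ∀ x ∈ A, ∀ j, 0 ≤ ρ x j) (hρM : ∀ x ∈ A, ∀ j, ρ x j ≤ M)
    (hQ : IsPmf Q) {a b : ℝ} (hab : a < b) (hb : b ≤ 0) :
    ∃ c ∈ Set.Ioo a b, PhiF P ρ Q c = (Lam P ρ Q b - Lam P ρ Q a) / (b - a) := by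
  apply exists_hasDerivAt_eq_slope (fun t => Lam P ρ Q t) (fun t => PhiF P ρ Q t) hab
  · intro t ht
    exact (hasDerivAt_Lam hae hρmeas hρnn hρM hQ (ht.2.trans hb)).continuousAt.continuousWithinAt
  · intro t ht
    exact hasDerivAt_Lam hae hρmeas hρnn hρM hQ (ht.2.le.trans hb)

lemma Zf_diff (hQ : IsPmf Q) (hQ' : IsPmf Q') (hx : x ∈ A)
    (hρnn : ∀ x ∈ A, ∀ j, 0 ≤ ρ x j) (hρM : ∀ x ∈ A, ∀ j, ρ x j ≤ M)
    (hl : l ≤ 0) (hl' : l' ≤ 0) :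
    |Zf ρ Q l x - Zf ρ Q' l' x| ≤ (∑ j, |Q j - Q' j|) + M * |l - l'| := by
  have hsplit : Zf ρ Q l x - Zf ρ Q' l' x = ∑ j, ((Q j - Q' j) * Real.exp (l * ρ x j)
      + Q' j * (Real.exp (l * ρ x j) - Real.exp (l' * ρ x j))) := by
    unfold Zf; rw [← Finset.sum_sub_distrib]; exact Finset.sum_congr rfl (fun j _ => by ring)
  rw [hsplit]
  calc |∑ j, ((Q j - Q' j) * Real.exp (l * ρ x j)
        + Q' j * (Real.exp (l * ρ x j) - Real.exp (l' * ρ x j)))|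
      ≤ ∑ j, |(Q j - Q' j) * Real.exp (l * ρ x j)
        + Q' j * (Real.exp (l * ρ x j) - Real.exp (l' * ρ x j))| :=
        Finset.abs_sum_le_sum_abs _ _
    _ ≤ ∑ j, (|Q j - Q' j| + Q' j * (M * |l - l'|)) := by
        refine Finset.sum_le_sum (fun j _ => ?_)
        have he1 : Real.exp (l * ρ x j) ≤ 1 := by
          rw [← Real.exp_zero]
          exact Real.exp_le_exp.2 (mul_nonpos_of_nonpos_of_nonneg hl (hρnn x hx j))
        have he2 : |Real.exp (l * ρ x j) - Real.exp (l' * ρ x j)| ≤ M * |l - l'| := by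
          refine le_trans (exp_lip (mul_nonpos_of_nonpos_of_nonneg hl (hρnn x hx j))
            (mul_nonpos_of_nonpos_of_nonneg hl' (hρnn x hx j))) ?_
          rw [← sub_mul, abs_mul, abs_of_nonneg (hρnn x hx j), mul_comm]
          exact mul_le_mul_of_nonneg_right (hρM x hx j) (abs_nonneg _)
        calc |(Q j - Q' j) * Real.exp (l * ρ x j)
            + Q' j * (Real.exp (l * ρ x j) - Real.exp (l' * ρ x j))|
            ≤ |(Q j - Q' j) * Real.exp (l * ρ x j)|
              + |Q' j * (Real.exp (l * ρ x j) - Real.exp (l' * ρ x j))| := abs_add_le _ _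
          _ ≤ |Q j - Q' j| + Q' j * (M * |l - l'|) := by
              rw [abs_mul, abs_mul, abs_of_nonneg (hQ'.1 j)]
              refine add_le_add ?_ (mul_le_mul_of_nonneg_left he2 (hQ'.1 j))
              rw [abs_of_pos (Real.exp_pos (l * ρ x j))]
              nlinarith [abs_nonneg (Q j - Q' j)]
    _ = (∑ j, |Q j - Q' j|) + M * |l - l'| := by
        rw [Finset.sum_add_distrib, ← Finset.sum_mul, hQ'.2, one_mul]

lemma logZf_diff (hM : 0 ≤ M) (ha : a ≤ 0) (hQ : IsPmf Q) (hQ' : IsPmf Q') (hx : x ∈ A)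
    (hρnn : ∀ x ∈ A, ∀ j, 0 ≤ ρ x j) (hρM : ∀ x ∈ A, ∀ j, ρ x j ≤ M)
    (hl : l ∈ Set.Icc a 0) (hl' : l' ∈ Set.Icc a 0) :
    |Real.log (Zf ρ Q l x) - Real.log (Zf ρ Q' l' x)|
      ≤ (Real.exp (a * M))⁻¹ * ((∑ j, |Q j - Q' j|) + M * |l - l'|) := by
  have hc : (0:ℝ) < Real.exp (a * M) := Real.exp_pos _
  have hcZ : Real.exp (a * M) ≤ Zf ρ Q l x := by
    refine le_trans (Real.exp_le_exp.2 ?_) (exp_le_Zf hQ hl.2 hx hρM)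
    exact mul_le_mul_of_nonneg_right hl.1 hM
  have hcZ' : Real.exp (a * M) ≤ Zf ρ Q' l' x := by
    refine le_trans (Real.exp_le_exp.2 ?_) (exp_le_Zf hQ' hl'.2 hx hρM)
    exact mul_le_mul_of_nonneg_right hl'.1 hM
  refine le_trans (log_diff hc hcZ hcZ') ?_
  rw [div_eq_inv_mul]
  exact mul_le_mul_of_nonneg_left (Zf_diff hQ hQ' hx hρnn hρM hl.2 hl'.2) (by positivity)

lemma Nf_diff (hQ : IsPmf Q) (hQ' : IsPmf Q') (hx : x ∈ A)
    (hρnn : ∀ x ∈ A, ∀ j, 0 ≤ ρ x j) (hρM : ∀ x ∈ A, ∀ j, ρ x j ≤ M)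
    (hl : l ≤ 0) (hl' : l' ≤ 0) :
    |(∑ j, Q j * (Real.exp (l * ρ x j) * ρ x j)) - ∑ j, Q' j * (Real.exp (l' * ρ x j) * ρ x j)|
      ≤ M * (∑ j, |Q j - Q' j|) + M ^ 2 * |l - l'| := by
  have hsplit : (∑ j, Q j * (Real.exp (l * ρ x j) * ρ x j))
      - ∑ j, Q' j * (Real.exp (l' * ρ x j) * ρ x j)
      = ∑ j, ρ x j * ((Q j - Q' j) * Real.exp (l * ρ x j)
        + Q' j * (Real.exp (l * ρ x j) - Real.exp (l' * ρ x j))) := by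
    rw [← Finset.sum_sub_distrib]; exact Finset.sum_congr rfl (fun j _ => by ring)
  rw [hsplit]
  calc |∑ j, ρ x j * ((Q j - Q' j) * Real.exp (l * ρ x j)
        + Q' j * (Real.exp (l * ρ x j) - Real.exp (l' * ρ x j)))|
      ≤ ∑ j, |ρ x j * ((Q j - Q' j) * Real.exp (l * ρ x j)
        + Q' j * (Real.exp (l * ρ x j) - Real.exp (l' * ρ x j)))| := Finset.abs_sum_le_sum_abs _ _
    _ ≤ ∑ j, M * (|Q j - Q' j| + Q' j * (M * |l - l'|)) := by
        refine Finset.sum_le_sum (fun j _ => ?_)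
        rw [abs_mul, abs_of_nonneg (hρnn x hx j)]
        have he1 : Real.exp (l * ρ x j) ≤ 1 := by
          rw [← Real.exp_zero]
          exact Real.exp_le_exp.2 (mul_nonpos_of_nonpos_of_nonneg hl (hρnn x hx j))
        have he2 : |Real.exp (l * ρ x j) - Real.exp (l' * ρ x j)| ≤ M * |l - l'| := by
          refine le_trans (exp_lip (mul_nonpos_of_nonpos_of_nonneg hl (hρnn x hx j))
            (mul_nonpos_of_nonpos_of_nonneg hl' (hρnn x hx j))) ?_
          rw [← sub_mul, abs_mul, abs_of_nonneg (hρnn x hx j), mul_comm]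
          exact mul_le_mul_of_nonneg_right (hρM x hx j) (abs_nonneg _)
        have hterm : |(Q j - Q' j) * Real.exp (l * ρ x j)
            + Q' j * (Real.exp (l * ρ x j) - Real.exp (l' * ρ x j))|
            ≤ |Q j - Q' j| + Q' j * (M * |l - l'|) := by
          calc _ ≤ |(Q j - Q' j) * Real.exp (l * ρ x j)|
              + |Q' j * (Real.exp (l * ρ x j) - Real.exp (l' * ρ x j))| := abs_add_le _ _
            _ ≤ _ := by
              rw [abs_mul, abs_mul, abs_of_nonneg (hQ'.1 j)]
              refine add_le_add ?_ (mul_le_mul_of_nonneg_left he2 (hQ'.1 j))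
              rw [abs_of_pos (Real.exp_pos (l * ρ x j))]
              nlinarith [abs_nonneg (Q j - Q' j)]
        calc ρ x j * |(Q j - Q' j) * Real.exp (l * ρ x j)
            + Q' j * (Real.exp (l * ρ x j) - Real.exp (l' * ρ x j))|
            ≤ M * |(Q j - Q' j) * Real.exp (l * ρ x j)
            + Q' j * (Real.exp (l * ρ x j) - Real.exp (l' * ρ x j))| :=
              mul_le_mul_of_nonneg_right (hρM x hx j) (abs_nonneg _)
          _ ≤ M * (|Q j - Q' j| + Q' j * (M * |l - l'|)) := by
              refine mul_le_mul_of_nonneg_left hterm ?_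
              exact le_trans (hρnn x hx j) (hρM x hx j)
    _ = M * (∑ j, |Q j - Q' j|) + M ^ 2 * |l - l'| := by
        rw [← Finset.mul_sum, Finset.sum_add_distrib, ← Finset.sum_mul, hQ'.2]
        ring

lemma psiF_diff (hM : 0 ≤ M) (ha : a ≤ 0) (hQ : IsPmf Q) (hQ' : IsPmf Q') (hx : x ∈ A)
    (hρnn : ∀ x ∈ A, ∀ j, 0 ≤ ρ x j) (hρM : ∀ x ∈ A, ∀ j, ρ x j ≤ M)
    (hl : l ∈ Set.Icc a 0) (hl' : l' ∈ Set.Icc a 0) :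
    |psiF ρ Q l x - psiF ρ Q' l' x|
      ≤ ((M + 1) ^ 2 * ((Real.exp (a * M))⁻¹ + ((Real.exp (a * M))⁻¹) ^ 2))
        * ((∑ j, |Q j - Q' j|) + |l - l'|) := by
  have hc : (0:ℝ) < Real.exp (a * M) := Real.exp_pos _
  have hcZ : Real.exp (a * M) ≤ Zf ρ Q l x := by
    refine le_trans (Real.exp_le_exp.2 ?_) (exp_le_Zf hQ hl.2 hx hρM)
    exact mul_le_mul_of_nonneg_right hl.1 hM
  have hcZ' : Real.exp (a * M) ≤ Zf ρ Q' l' x := by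
    refine le_trans (Real.exp_le_exp.2 ?_) (exp_le_Zf hQ' hl'.2 hx hρM)
    exact mul_le_mul_of_nonneg_right hl'.1 hM
  have hu' : |∑ j, Q' j * (Real.exp (l' * ρ x j) * ρ x j)| ≤ M := by
    have h1 : (0:ℝ) ≤ ∑ j, Q' j * (Real.exp (l' * ρ x j) * ρ x j) :=
      Finset.sum_nonneg (fun j _ => mul_nonneg (hQ'.1 j)
        (mul_nonneg (Real.exp_pos _).le (hρnn x hx j)))
    rw [abs_of_nonneg h1]
    calc ∑ j, Q' j * (Real.exp (l' * ρ x j) * ρ x j) ≤ ∑ j, Q' j * M := by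
          refine Finset.sum_le_sum (fun j _ => ?_)
          have he1 : Real.exp (l' * ρ x j) ≤ 1 := by
            rw [← Real.exp_zero]
            exact Real.exp_le_exp.2 (mul_nonpos_of_nonpos_of_nonneg hl'.2 (hρnn x hx j))
          have h4 := hρnn x hx j; have h5 := hρM x hx j
          have h6 : Real.exp (l' * ρ x j) * ρ x j ≤ M := by nlinarith
          exact mul_le_mul_of_nonneg_left h6 (hQ'.1 j)
      _ = M := by rw [← Finset.sum_mul, hQ'.2, one_mul]
  have key := ratio_diff (u := ∑ j, Q j * (Real.exp (l * ρ x j) * ρ x j))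
    (v := Zf ρ Q l x) (u' := ∑ j, Q' j * (Real.exp (l' * ρ x j) * ρ x j))
    (v' := Zf ρ Q' l' x) hc hcZ hcZ' hu'
  refine le_trans key ?_
  set e := (Real.exp (a * M))⁻¹ with he
  have he1 : (1:ℝ) ≤ e := by
    rw [he, one_le_inv₀ hc]
    exact Real.exp_le_one_iff.2 (mul_nonpos_of_nonpos_of_nonneg ha hM)
  set S := ∑ j, |Q j - Q' j| with hS
  have hS0 : 0 ≤ S := Finset.sum_nonneg (fun j _ => abs_nonneg _)
  have hdl0 : 0 ≤ |l - l'| := abs_nonneg _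
  have h1 : |(∑ j, Q j * (Real.exp (l * ρ x j) * ρ x j))
      - ∑ j, Q' j * (Real.exp (l' * ρ x j) * ρ x j)| / Real.exp (a * M)
      ≤ (M * S + M ^ 2 * |l - l'|) * e := by
    rw [div_eq_mul_inv, ← he]
    exact mul_le_mul_of_nonneg_right (Nf_diff hQ hQ' hx hρnn hρM hl.2 hl'.2) (by positivity)
  have h2 : M * |Zf ρ Q l x - Zf ρ Q' l' x| / Real.exp (a * M) ^ 2
      ≤ M * (S + M * |l - l'|) * e ^ 2 := by
    rw [div_eq_mul_inv, ← inv_pow, ← he]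
    exact mul_le_mul_of_nonneg_right
      (mul_le_mul_of_nonneg_left (Zf_diff hQ hQ' hx hρnn hρM hl.2 hl'.2) hM) (by positivity)
  have hA : M * S + M ^ 2 * |l - l'| ≤ (M + 1) ^ 2 * (S + |l - l'|) := by nlinarith
  have hB : M * (S + M * |l - l'|) ≤ (M + 1) ^ 2 * (S + |l - l'|) := by nlinarith
  have he0 : (0:ℝ) ≤ e := by positivity
  calc |(∑ j, Q j * (Real.exp (l * ρ x j) * ρ x j))
        - ∑ j, Q' j * (Real.exp (l' * ρ x j) * ρ x j)| / Real.exp (a * M)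
      + M * |Zf ρ Q l x - Zf ρ Q' l' x| / Real.exp (a * M) ^ 2
      ≤ (M * S + M ^ 2 * |l - l'|) * e + M * (S + M * |l - l'|) * e ^ 2 := add_le_add h1 h2
    _ ≤ ((M + 1) ^ 2 * (S + |l - l'|)) * e + ((M + 1) ^ 2 * (S + |l - l'|)) * e ^ 2 :=
        add_le_add (mul_le_mul_of_nonneg_right hA he0)
          (mul_le_mul_of_nonneg_right hB (by positivity))
    _ = ((M + 1) ^ 2 * (e + e ^ 2)) * (S + |l - l'|) := by ring

lemma Lam_diff (hae : ∀ᵐ x ∂P, x ∈ A) (hM : 0 ≤ M) (ha : a ≤ 0)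
    (hρmeas : ∀ j, Measurable fun x => ρ x j)
    (hρnn : ∀ x ∈ A, ∀ j, 0 ≤ ρ x j) (hρM : ∀ x ∈ A, ∀ j, ρ x j ≤ M)
    (hQ : IsPmf Q) (hQ' : IsPmf Q') (hl : l ∈ Set.Icc a 0) (hl' : l' ∈ Set.Icc a 0) :
    |Lam P ρ Q l - Lam P ρ Q' l'|
      ≤ (Real.exp (a * M))⁻¹ * ((∑ j, |Q j - Q' j|) + M * |l - l'|) := by
  have i1 := integrable_logZf (Q := Q) (l := l) hae hρmeas hρnn hρM hQ hl.2
  have i2 := integrable_logZf (Q := Q') (l := l') hae hρmeas hρnn hρM hQ' hl'.2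
  rw [Lam_eq, Lam_eq, ← integral_sub i1 i2]
  exact abs_integral_le' (i1.sub i2)
    (hae.mono fun x hx => logZf_diff hM ha hQ hQ' hx hρnn hρM hl hl')

lemma Phi_diff (hae : ∀ᵐ x ∂P, x ∈ A) (hM : 0 ≤ M) (ha : a ≤ 0)
    (hρmeas : ∀ j, Measurable fun x => ρ x j)
    (hρnn : ∀ x ∈ A, ∀ j, 0 ≤ ρ x j) (hρM : ∀ x ∈ A, ∀ j, ρ x j ≤ M)
    (hQ : IsPmf Q) (hQ' : IsPmf Q') (hl : l ∈ Set.Icc a 0) (hl' : l' ∈ Set.Icc a 0) :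
    |PhiF P ρ Q l - PhiF P ρ Q' l'|
      ≤ ((M + 1) ^ 2 * ((Real.exp (a * M))⁻¹ + ((Real.exp (a * M))⁻¹) ^ 2))
        * ((∑ j, |Q j - Q' j|) + |l - l'|) := by
  have i1 := integrable_psiF (Q := Q) (l := l) hae hρmeas hρnn hρM hQ
  have i2 := integrable_psiF (Q := Q') (l := l') hae hρmeas hρnn hρM hQ'
  rw [PhiF, PhiF, ← integral_sub i1 i2]
  exact abs_integral_le' (i1.sub i2)
    (hae.mono fun x hx => psiF_diff hM ha hQ hQ' hx hρnn hρM hl hl')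

lemma isPmf_uniform (hk : 0 < k) : IsPmf (fun _ : Fin k => (k:ℝ)⁻¹) := by
  constructor
  · intro j; positivity
  · rw [Finset.sum_const, Finset.card_univ, Fintype.card_fin, nsmul_eq_mul]
    field_simp

lemma GammaSet_nonempty (hk : 0 < k) (l : ℝ) :
    {y : ℝ | ∃ Q : Fin k → ℝ, IsPmf Q ∧ y = Lam P ρ Q l}.Nonempty :=
  ⟨_, _, isPmf_uniform hk, rfl⟩

lemma Lam_nonpos (hae : ∀ᵐ x ∂P, x ∈ A)
    (hρmeas : ∀ j, Measurable fun x => ρ x j)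
    (hρnn : ∀ x ∈ A, ∀ j, 0 ≤ ρ x j) (hρM : ∀ x ∈ A, ∀ j, ρ x j ≤ M)
    (hQ : IsPmf Q) (hl : l ≤ 0) : Lam P ρ Q l ≤ 0 := by
  rw [Lam_eq]
  have := integral_mono_ae (integrable_logZf hae hρmeas hρnn hρM hQ hl)
    (integrable_const 0) (hae.mono fun x hx => logZf_nonpos hQ hl hx hρnn)
  simpa using this

lemma GammaSet_bdd (hae : ∀ᵐ x ∂P, x ∈ A)
    (hρmeas : ∀ j, Measurable fun x => ρ x j)
    (hρnn : ∀ x ∈ A, ∀ j, 0 ≤ ρ x j) (hρM : ∀ x ∈ A, ∀ j, ρ x j ≤ M)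
    (hl : l ≤ 0) :
    BddAbove {y : ℝ | ∃ Q : Fin k → ℝ, IsPmf Q ∧ y = Lam P ρ Q l} := by
  refine ⟨0, ?_⟩
  rintro y ⟨Q, hQ, rfl⟩
  exact Lam_nonpos hae hρmeas hρnn hρM hQ hl

lemma Lam_le_Gamma (hae : ∀ᵐ x ∂P, x ∈ A)
    (hρmeas : ∀ j, Measurable fun x => ρ x j)
    (hρnn : ∀ x ∈ A, ∀ j, 0 ≤ ρ x j) (hρM : ∀ x ∈ A, ∀ j, ρ x j ≤ M)
    (hQ : IsPmf Q) (hl : l ≤ 0) : Lam P ρ Q l ≤ Gamma P ρ l :=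
  le_csSup (GammaSet_bdd hae hρmeas hρnn hρM hl) ⟨Q, hQ, rfl⟩

lemma Gamma_le (hk : 0 < k) {c : ℝ}
    (h : ∀ Q : Fin k → ℝ, IsPmf Q → Lam P ρ Q l ≤ c) : Gamma P ρ l ≤ c := by
  refine csSup_le (GammaSet_nonempty hk l) ?_
  rintro y ⟨Q, hQ, rfl⟩
  exact h Q hQ

lemma Lam_zero (hQ : IsPmf Q) : Lam P ρ Q 0 = 0 := by
  rw [Lam_eq]
  have : ∀ x : ℝ, Real.log (Zf ρ Q 0 x) = 0 := by
    intro x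
    have : Zf ρ Q 0 x = 1 := by simp [Zf, hQ.2]
    rw [this, Real.log_one]
  simp [this]

lemma Gamma_zero (hk : 0 < k) : Gamma P ρ (0:ℝ) = 0 := by
  apply le_antisymm
  · refine csSup_le (GammaSet_nonempty hk 0) ?_
    rintro y ⟨Q, hQ, rfl⟩
    rw [Lam_zero hQ]
  · refine le_csSup ⟨0, ?_⟩ ⟨_, isPmf_uniform hk, (Lam_zero (isPmf_uniform hk)).symm⟩
    rintro y ⟨Q, hQ, rfl⟩
    rw [Lam_zero hQ]

lemma neg_logk_le_Gamma (hk : 0 < k) (hae : ∀ᵐ x ∂P, x ∈ A)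
    (hρmeas : ∀ j, Measurable fun x => ρ x j)
    (hρnn : ∀ x ∈ A, ∀ j, 0 ≤ ρ x j) (hρM : ∀ x ∈ A, ∀ j, ρ x j ≤ M)
    (hρmin : ∀ x ∈ A, ∃ j, ρ x j = 0) (hl : l ≤ 0) :
    -Real.log k ≤ Gamma P ρ l := by
  set Qu : Fin k → ℝ := fun _ => (k:ℝ)⁻¹ with hQu
  have hQupmf := isPmf_uniform (k := k) hk
  refine le_trans ?_ (Lam_le_Gamma hae hρmeas hρnn hρM hQupmf hl)
  rw [Lam_eq]
  have key : ∀ x ∈ A, -Real.log k ≤ Real.log (Zf ρ Qu l x) := by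
    intro x hx
    obtain ⟨j0, hj0⟩ := hρmin x hx
    have hZ : (k:ℝ)⁻¹ ≤ Zf ρ Qu l x := by
      have : (k:ℝ)⁻¹ = Qu j0 * Real.exp (l * ρ x j0) := by
        rw [hj0]; simp [hQu]
      rw [this]
      exact Finset.single_le_sum
        (f := fun j => Qu j * Real.exp (l * ρ x j))
        (fun j _ => mul_nonneg (hQupmf.1 j) (Real.exp_pos _).le) (Finset.mem_univ j0)
    calc -Real.log k = Real.log (k:ℝ)⁻¹ := by rw [Real.log_inv]
      _ ≤ Real.log (Zf ρ Qu l x) := Real.log_le_log (by positivity) hZ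
  have := integral_mono_ae (integrable_const (-Real.log k))
    (integrable_logZf hae hρmeas hρnn hρM hQupmf hl)
    (hae.mono fun x hx => key x hx)
  simpa using this

lemma Gamma_sub_le (hk : 0 < k) (hae : ∀ᵐ x ∂P, x ∈ A) (hM : 0 ≤ M) (ha : a ≤ 0)
    (hρmeas : ∀ j, Measurable fun x => ρ x j)
    (hρnn : ∀ x ∈ A, ∀ j, 0 ≤ ρ x j) (hρM : ∀ x ∈ A, ∀ j, ρ x j ≤ M)
    (hl : l ∈ Set.Icc a 0) (hl' : l' ∈ Set.Icc a 0) :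
    Gamma P ρ l ≤ Gamma P ρ l' + (Real.exp (a * M))⁻¹ * M * |l - l'| := by
  refine Gamma_le hk (fun Q hQ => ?_)
  have h1 := Lam_diff (Q := Q) (Q' := Q) hae hM ha hρmeas hρnn hρM hQ hQ hl hl'
  simp only [sub_self, abs_zero, Finset.sum_const_zero, zero_add] at h1
  have h2 := Lam_le_Gamma (Q := Q) (l := l') hae hρmeas hρnn hρM hQ hl'.2
  have := (abs_le.1 h1).2
  calc Lam P ρ Q l ≤ Lam P ρ Q l' + (Real.exp (a*M))⁻¹ * (M * |l - l'|) := by linarith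
    _ ≤ _ := by rw [mul_assoc]; linarith

lemma continuousOn_LamQ (hae : ∀ᵐ x ∂P, x ∈ A) (hM : 0 ≤ M) (ha : a ≤ 0)
    (hρmeas : ∀ j, Measurable fun x => ρ x j)
    (hρnn : ∀ x ∈ A, ∀ j, 0 ≤ ρ x j) (hρM : ∀ x ∈ A, ∀ j, ρ x j ≤ M)
    (hl : l ∈ Set.Icc a 0) :
    ContinuousOn (fun Q : Fin k → ℝ => Lam P ρ Q l) (stdSimplex ℝ (Fin k)) := by
  refine LipschitzOnWith.continuousOn (K := ((Real.exp (a * M))⁻¹ * k).toNNReal)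
    (LipschitzOnWith.of_dist_le_mul (fun Q hQmem Q' hQ'mem => ?_))
  have hQ : IsPmf Q := ⟨hQmem.1, hQmem.2⟩
  have hQ' : IsPmf Q' := ⟨hQ'mem.1, hQ'mem.2⟩
  have h1 := Lam_diff (Q := Q) (Q' := Q') (l := l) (l' := l) hae hM ha hρmeas hρnn hρM hQ hQ' hl hl
  simp only [sub_self, abs_zero, mul_zero, add_zero] at h1
  have h2 : (∑ j, |Q j - Q' j|) ≤ k * dist Q Q' := by
    calc (∑ j, |Q j - Q' j|) ≤ ∑ _j : Fin k, dist Q Q' := by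
          refine Finset.sum_le_sum (fun j _ => ?_)
          rw [← Real.dist_eq]
          exact dist_le_pi_dist Q Q' j
      _ = k * dist Q Q' := by rw [Finset.sum_const, Finset.card_univ, Fintype.card_fin, nsmul_eq_mul]
  rw [Real.dist_eq]
  calc |Lam P ρ Q l - Lam P ρ Q' l| ≤ (Real.exp (a * M))⁻¹ * (∑ j, |Q j - Q' j|) := h1
    _ ≤ (Real.exp (a * M))⁻¹ * (k * dist Q Q') := by
        exact mul_le_mul_of_nonneg_left h2 (by positivity)
    _ = ((Real.exp (a * M))⁻¹ * k) * dist Q Q' := by ring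
    _ = (((Real.exp (a * M))⁻¹ * k).toNNReal : ℝ) * dist Q Q' := by
        rw [Real.coe_toNNReal _ (by positivity)]

lemma Gamma_attained (hk : 0 < k) (hae : ∀ᵐ x ∂P, x ∈ A) (hM : 0 ≤ M) (ha : a ≤ 0)
    (hρmeas : ∀ j, Measurable fun x => ρ x j)
    (hρnn : ∀ x ∈ A, ∀ j, 0 ≤ ρ x j) (hρM : ∀ x ∈ A, ∀ j, ρ x j ≤ M)
    (hl : l ∈ Set.Icc a 0) :
    ∃ Q : Fin k → ℝ, IsPmf Q ∧ Lam P ρ Q l = Gamma P ρ l := by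
  obtain ⟨Q, hQmem, hQmax⟩ := (isCompact_stdSimplex ℝ (Fin k)).exists_isMaxOn
    ⟨_, (isPmf_uniform hk : IsPmf (fun _ : Fin k => (k:ℝ)⁻¹))⟩
    (continuousOn_LamQ hae hM ha hρmeas hρnn hρM hl)
  have hQ : IsPmf Q := ⟨hQmem.1, hQmem.2⟩
  refine ⟨Q, hQ, le_antisymm (Lam_le_Gamma hae hρmeas hρnn hρM hQ hl.2) ?_⟩
  refine Gamma_le hk (fun Q' hQ' => ?_)
  exact hQmax (⟨hQ'.1, hQ'.2⟩ : Q' ∈ stdSimplex ℝ (Fin k))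

lemma integrable_rho (hae : ∀ᵐ x ∂P, x ∈ A)
    (hρmeas : ∀ j, Measurable fun x => ρ x j)
    (hρnn : ∀ x ∈ A, ∀ j, 0 ≤ ρ x j) (hρM : ∀ x ∈ A, ∀ j, ρ x j ≤ M) (j : Fin k) :
    Integrable (fun x => ρ x j) P :=
  integrable_of_boundOn P A hae (hρmeas j).aestronglyMeasurable M
    (fun x hx => by rw [abs_of_nonneg (hρnn x hx j)]; exact hρM x hx j)

lemma Dmax_le_intrho (hρmeas : ∀ j, Measurable fun x => ρ x j) (j : Fin k) :
    Dmax P ρ ≤ ∫ x, ρ x j ∂P :=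
  csInf_le (Set.Finite.bddBelow (Set.finite_range _)) ⟨j, rfl⟩

lemma Dmax_le_DmaxPQ (hρmeas : ∀ j, Measurable fun x => ρ x j) (hQ : IsPmf Q) :
    Dmax P ρ ≤ DmaxPQ P ρ Q := by
  calc Dmax P ρ = ∑ j, Q j * Dmax P ρ := by rw [← Finset.sum_mul, hQ.2, one_mul]
    _ ≤ ∑ j, Q j * ∫ x, ρ x j ∂P := by
        refine Finset.sum_le_sum (fun j _ => ?_)
        exact mul_le_mul_of_nonneg_left (Dmax_le_intrho hρmeas j) (hQ.1 j)
    _ = DmaxPQ P ρ Q := rfl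

lemma integral_sumQrho (hae : ∀ᵐ x ∂P, x ∈ A)
    (hρmeas : ∀ j, Measurable fun x => ρ x j)
    (hρnn : ∀ x ∈ A, ∀ j, 0 ≤ ρ x j) (hρM : ∀ x ∈ A, ∀ j, ρ x j ≤ M)
    (hQ : IsPmf Q) :
    ∫ x, (∑ j, Q j * ρ x j) ∂P = DmaxPQ P ρ Q := by
  rw [integral_finset_sum _ (fun j _ => (integrable_rho hae hρmeas hρnn hρM j).const_mul (Q j))]
  unfold DmaxPQ
  exact Finset.sum_congr rfl (fun j _ => integral_const_mul _ _)

lemma Lam_le_quad (hae : ∀ᵐ x ∂P, x ∈ A) (hM : 0 ≤ M)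
    (hρmeas : ∀ j, Measurable fun x => ρ x j)
    (hρnn : ∀ x ∈ A, ∀ j, 0 ≤ ρ x j) (hρM : ∀ x ∈ A, ∀ j, ρ x j ≤ M)
    (hQ : IsPmf Q) (hl : l ≤ 0) (hlM : |l| * M ≤ 1) :
    Lam P ρ Q l ≤ l * DmaxPQ P ρ Q + l ^ 2 * M ^ 2 := by
  have key : ∀ x ∈ A, Real.log (Zf ρ Q l x) ≤ l * (∑ j, Q j * ρ x j) + l ^ 2 * M ^ 2 := by
    intro x hx
    have h1 : Real.log (Zf ρ Q l x) ≤ Zf ρ Q l x - 1 :=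
      Real.log_le_sub_one_of_pos (Zf_pos hQ)
    have h2 : Zf ρ Q l x - 1 = ∑ j, Q j * (Real.exp (l * ρ x j) - 1) := by
      have e1 : ∑ j, Q j * (Real.exp (l * ρ x j) - 1)
          = (∑ j, Q j * Real.exp (l * ρ x j)) - ∑ j, Q j := by
        rw [← Finset.sum_sub_distrib]
        exact Finset.sum_congr rfl (fun j _ => by ring)
      rw [e1, hQ.2]; rfl
    have h3 : ∑ j, Q j * (Real.exp (l * ρ x j) - 1)
        ≤ ∑ j, Q j * (l * ρ x j + l ^ 2 * M ^ 2) := by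
      refine Finset.sum_le_sum (fun j _ => ?_)
      refine mul_le_mul_of_nonneg_left ?_ (hQ.1 j)
      have habs : |l * ρ x j| ≤ 1 := by
        rw [abs_mul]
        calc |l| * |ρ x j| ≤ |l| * M := by
              rw [abs_of_nonneg (hρnn x hx j)]
              exact mul_le_mul_of_nonneg_left (hρM x hx j) (abs_nonneg l)
          _ ≤ 1 := hlM
      have := abs_exp_sub_one_sub_id_le habs
      have h4 : (l * ρ x j) ^ 2 ≤ l ^ 2 * M ^ 2 := by
        rw [mul_pow]
        refine mul_le_mul_of_nonneg_left ?_ (sq_nonneg l)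
        have := hρnn x hx j; have := hρM x hx j
        nlinarith
      have h5 := (abs_le.1 this).2
      linarith
    have h6 : ∑ j, Q j * (l * ρ x j + l ^ 2 * M ^ 2)
        = l * (∑ j, Q j * ρ x j) + l ^ 2 * M ^ 2 := by
      have e1 : ∀ j : Fin k, Q j * (l * ρ x j + l ^ 2 * M ^ 2)
          = l * (Q j * ρ x j) + Q j * (l ^ 2 * M ^ 2) := fun j => by ring
      simp_rw [e1]
      rw [Finset.sum_add_distrib, ← Finset.mul_sum, ← Finset.sum_mul, hQ.2, one_mul]
    linarith
  rw [Lam_eq]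
  have hint : Integrable (fun x => l * (∑ j, Q j * ρ x j) + l ^ 2 * M ^ 2) P := by
    refine Integrable.add ?_ (integrable_const _)
    exact (integrable_finset_sum _ (fun j _ =>
      (integrable_rho hae hρmeas hρnn hρM j).const_mul (Q j))).const_mul l
  have := integral_mono_ae (integrable_logZf hae hρmeas hρnn hρM hQ hl) hint
    (hae.mono fun x hx => key x hx)
  refine le_trans this ?_
  rw [integral_add ((integrable_finset_sum _ (fun j _ =>
      (integrable_rho hae hρmeas hρnn hρM j).const_mul (Q j))).const_mul l)
    (integrable_const _), integral_const_mul,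
    integral_sumQrho hae hρmeas hρnn hρM hQ]
  simp

lemma Gamma_dist_le (hk : 0 < k) (hae : ∀ᵐ x ∂P, x ∈ A) (hM : 0 ≤ M) (ha : a ≤ 0)
    (hρmeas : ∀ j, Measurable fun x => ρ x j)
    (hρnn : ∀ x ∈ A, ∀ j, 0 ≤ ρ x j) (hρM : ∀ x ∈ A, ∀ j, ρ x j ≤ M)
    (hl : l ∈ Set.Icc a 0) (hl' : l' ∈ Set.Icc a 0) :
    |Gamma P ρ l - Gamma P ρ l'| ≤ (Real.exp (a * M))⁻¹ * M * |l - l'| := by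
  have h1 := Gamma_sub_le hk hae hM ha hρmeas hρnn hρM hl hl'
  have h2 := Gamma_sub_le hk hae hM ha hρmeas hρnn hρM hl' hl
  rw [abs_sub_comm l' l] at h2
  rw [abs_le]
  constructor <;> linarith

lemma measurable_sum_w_mul {w : ℝ → Fin k → ℝ} (hwm : Measurable w)
    (g : ℝ → Fin k → ℝ) (hg : ∀ j, Measurable fun x => g x j) :
    Measurable fun x => ∑ j, w x j * g x j :=
  Finset.measurable_sum _ (fun j _ => ((measurable_pi_apply j).comp hwm).mul (hg j))

lemma w_le_one {w : Fin k → ℝ} (hw0 : ∀ j, 0 ≤ w j) (hw1 : ∑ j, w j = 1) (j : Fin k) :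
    w j ≤ 1 := by
  rw [← hw1]
  exact Finset.single_le_sum (fun i _ => hw0 i) (Finset.mem_univ j)

lemma abs_mul_log_le {w q : ℝ} (hw0 : 0 ≤ w) (hw1 : w ≤ 1) (hq : 0 < w → 0 < q) :
    |w * Real.log (w / q)| ≤ 1 + |Real.log q| := by
  rcases eq_or_lt_of_le hw0 with h | h
  · rw [← h]; simp; positivity
  · have hq' := hq h
    rw [Real.log_div h.ne' hq'.ne']
    have h1 : |w * Real.log w| ≤ 1 := by
      have hlog : Real.log w ≤ 0 := Real.log_nonpos hw0 hw1
      have h2 : -Real.log w = Real.log w⁻¹ := (Real.log_inv w).symm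
      have h3 : Real.log w⁻¹ ≤ w⁻¹ - 1 := Real.log_le_sub_one_of_pos (by positivity)
      have h4 : w * -Real.log w ≤ w * (w⁻¹ - 1) := by
        rw [h2]
        exact mul_le_mul_of_nonneg_left h3 hw0
      have h5 : w * (w⁻¹ - 1) = 1 - w := by field_simp
      rw [abs_mul, abs_of_nonneg hw0, abs_of_nonpos hlog]
      nlinarith
    calc |w * (Real.log w - Real.log q)| ≤ |w * Real.log w| + |w * Real.log q| := by
          rw [mul_sub]; exact abs_sub _ _
      _ ≤ 1 + |Real.log q| := by
          refine add_le_add h1 ?_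
          rw [abs_mul, abs_of_nonneg hw0]
          nlinarith [abs_nonneg (Real.log q)]

lemma partA (hae : ∀ᵐ x ∂P, x ∈ A)
    (hρmeas : ∀ j, Measurable fun x => ρ x j)
    (hρnn : ∀ x ∈ A, ∀ j, 0 ≤ ρ x j) (hρM : ∀ x ∈ A, ∀ j, ρ x j ≤ M)
    (hQ : IsPmf Q) {w : ℝ → Fin k → ℝ} (hwm : Measurable w)
    (hw0 : ∀ x j, 0 ≤ w x j) (hw1 : ∀ x, ∑ j, w x j = 1)
    (hws : ∀ᵐ x ∂P, ∀ j, 0 < w x j → 0 < Q j) (hl : l ≤ 0) {D : ℝ}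
    (hD : ∫ x, ∑ j, w x j * ρ x j ∂P ≤ D) :
    l * D - Lam P ρ Q l
      ≤ Real.log 2 * ∫ x, ∑ j, w x j * Real.logb 2 (w x j / Q j) ∂P := by
  have hlog2 : (0:ℝ) < Real.log 2 := Real.log_pos (by norm_num)
  -- rewrite in terms of natural log
  have step0 : Real.log 2 * ∫ x, ∑ j, w x j * Real.logb 2 (w x j / Q j) ∂P
      = ∫ x, ∑ j, w x j * Real.log (w x j / Q j) ∂P := by
    rw [← integral_const_mul]
    congr 1
    funext x
    rw [Finset.mul_sum]
    refine Finset.sum_congr rfl (fun j _ => ?_)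
    rw [Real.logb, div_eq_inv_mul]
    field_simp
  rw [step0]
  set g : ℝ → ℝ := fun x => ∑ j, w x j * Real.log (w x j / Q j) with hg
  set h : ℝ → ℝ := fun x => l * (∑ j, w x j * ρ x j) - Real.log (Zf ρ Q l x) with hh
  have hgm : Measurable g := by
    apply Finset.measurable_sum
    intro j _
    exact ((measurable_pi_apply j).comp hwm).mul
      (Real.measurable_log.comp (((measurable_pi_apply j).comp hwm).div_const (Q j)))
  have hgint : Integrable g P := by
    refine Integrable.mono' (integrable_const (∑ j : Fin k, (1 + |Real.log (Q j)|)))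
      hgm.aestronglyMeasurable (hws.mono fun x hx => ?_)
    rw [Real.norm_eq_abs]
    calc |∑ j, w x j * Real.log (w x j / Q j)|
        ≤ ∑ j, |w x j * Real.log (w x j / Q j)| := Finset.abs_sum_le_sum_abs _ _
      _ ≤ ∑ j : Fin k, (1 + |Real.log (Q j)|) := by
          refine Finset.sum_le_sum (fun j _ => ?_)
          exact abs_mul_log_le (hw0 x j) (w_le_one (hw0 x) (hw1 x) j) (hx j)
  have hwrint : Integrable (fun x => ∑ j, w x j * ρ x j) P := by
    refine integrable_of_boundOn P A hae
      (measurable_sum_w_mul hwm ρ hρmeas).aestronglyMeasurable M (fun x hx => ?_)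
    have h1 : (0:ℝ) ≤ ∑ j, w x j * ρ x j :=
      Finset.sum_nonneg (fun j _ => mul_nonneg (hw0 x j) (hρnn x hx j))
    rw [abs_of_nonneg h1]
    calc ∑ j, w x j * ρ x j ≤ ∑ j, w x j * M :=
          Finset.sum_le_sum (fun j _ => mul_le_mul_of_nonneg_left (hρM x hx j) (hw0 x j))
      _ = M := by rw [← Finset.sum_mul, hw1 x, one_mul]
  have hhint : Integrable h P :=
    (hwrint.const_mul l).sub (integrable_logZf hae hρmeas hρnn hρM hQ hl)
  -- pointwise Gibbs
  have hpt : ∀ᵐ x ∂P, h x ≤ g x := by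
    filter_upwards [hws] with x hx
    have key := gibbs (w x) (fun j => Q j * Real.exp (l * ρ x j)) (hw0 x) (hw1 x)
      (fun j => mul_nonneg (hQ.1 j) (Real.exp_pos _).le)
      (fun j hj => mul_pos (hx j hj) (Real.exp_pos _))
    have heq : ∑ j, w x j * Real.log (w x j / (Q j * Real.exp (l * ρ x j)))
        = g x - l * (∑ j, w x j * ρ x j) := by
      rw [hg, Finset.mul_sum, ← Finset.sum_sub_distrib]
      refine Finset.sum_congr rfl (fun j _ => ?_)
      rcases eq_or_lt_of_le (hw0 x j) with h0 | h0
      · rw [← h0]; ring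
      · have hQj := hx j h0
        rw [show w x j / (Q j * Real.exp (l * ρ x j))
            = (w x j / Q j) / Real.exp (l * ρ x j) by field_simp,
          Real.log_div (by positivity) (Real.exp_ne_zero _), Real.log_exp]
        ring
    have hZsum : (∑ j, Q j * Real.exp (l * ρ x j)) = Zf ρ Q l x := rfl
    rw [heq, hZsum] at key
    simp only [hh]
    linarith
  have hint := integral_mono_ae hhint hgint hpt
  have hval : ∫ x, h x ∂P = l * (∫ x, ∑ j, w x j * ρ x j ∂P) - Lam P ρ Q l := by
    rw [hh, integral_sub (hwrint.const_mul l) (integrable_logZf hae hρmeas hρnn hρM hQ hl),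
      integral_const_mul, Lam_eq]
  have hld : l * D ≤ l * ∫ x, ∑ j, w x j * ρ x j ∂P := mul_le_mul_of_nonpos_left hD hl
  linarith

noncomputable def wTilt {k : ℕ} (ρ : ℝ → Fin k → ℝ) (Q : Fin k → ℝ) (l : ℝ)
    (x : ℝ) (j : Fin k) : ℝ :=
  Q j * Real.exp (l * ρ x j) / Zf ρ Q l x

lemma wTilt_nonneg (hQ : IsPmf Q) (x : ℝ) (j : Fin k) : 0 ≤ wTilt ρ Q l x j :=
  div_nonneg (mul_nonneg (hQ.1 j) (Real.exp_pos _).le) (Zf_pos hQ).le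

lemma wTilt_sum (hQ : IsPmf Q) (x : ℝ) : ∑ j, wTilt ρ Q l x j = 1 := by
  unfold wTilt
  rw [← Finset.sum_div]
  exact div_self (Zf_pos hQ).ne'

lemma wTilt_measurable (hρmeas : ∀ j, Measurable fun x => ρ x j) :
    Measurable (wTilt ρ Q l) := by
  apply measurable_pi_lambda
  intro j
  exact ((Real.measurable_exp.comp ((hρmeas j).const_mul l)).const_mul (Q j)).div
    (measurable_Zf hρmeas)

lemma wTilt_supp (hQ : IsPmf Q) (x : ℝ) (j : Fin k) (h : 0 < wTilt ρ Q l x j) :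
    0 < Q j := by
  by_contra hc
  push_neg at hc
  have h1 : Q j * Real.exp (l * ρ x j) ≤ 0 :=
    mul_nonpos_of_nonpos_of_nonneg hc (Real.exp_pos _).le
  have h2 : wTilt ρ Q l x j ≤ 0 := div_nonpos_of_nonpos_of_nonneg h1 (Zf_pos hQ).le
  linarith

lemma wTilt_rho_sum (hQ : IsPmf Q) (x : ℝ) :
    ∑ j, wTilt ρ Q l x j * ρ x j = psiF ρ Q l x := by
  unfold wTilt psiF
  have e : ∀ j : Fin k, Q j * Real.exp (l * ρ x j) / Zf ρ Q l x * ρ x j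
      = (Q j * (Real.exp (l * ρ x j) * ρ x j)) / Zf ρ Q l x := fun j => by ring
  rw [Finset.sum_congr rfl (fun j _ => e j), ← Finset.sum_div]

lemma wTilt_cost_pointwise (hQ : IsPmf Q) (x : ℝ) :
    ∑ j, wTilt ρ Q l x j * Real.logb 2 (wTilt ρ Q l x j / Q j)
      = (l * (∑ j, wTilt ρ Q l x j * ρ x j) - Real.log (Zf ρ Q l x)) / Real.log 2 := by
  have hZ := Zf_pos (ρ := ρ) (l := l) (x := x) hQ
  have e1 : ∀ j : Fin k, wTilt ρ Q l x j * Real.logb 2 (wTilt ρ Q l x j / Q j)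
      = (l * (wTilt ρ Q l x j * ρ x j) - wTilt ρ Q l x j * Real.log (Zf ρ Q l x)) / Real.log 2 := by
    intro j
    rcases eq_or_lt_of_le (hQ.1 j) with h0 | h0
    · have : wTilt ρ Q l x j = 0 := by rw [wTilt, ← h0]; simp
      rw [this]; simp
    · have hwq : wTilt ρ Q l x j / Q j = Real.exp (l * ρ x j) / Zf ρ Q l x := by
        rw [wTilt]; field_simp
      rw [hwq, Real.logb, Real.log_div (Real.exp_ne_zero _) hZ.ne', Real.log_exp]
      ring
  rw [Finset.sum_congr rfl (fun j _ => e1 j), ← Finset.sum_div]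
  congr 1
  rw [Finset.sum_sub_distrib, ← Finset.mul_sum, ← Finset.sum_mul, wTilt_sum hQ, one_mul]

lemma wTilt_cost_integral (hae : ∀ᵐ x ∂P, x ∈ A)
    (hρmeas : ∀ j, Measurable fun x => ρ x j)
    (hρnn : ∀ x ∈ A, ∀ j, 0 ≤ ρ x j) (hρM : ∀ x ∈ A, ∀ j, ρ x j ≤ M)
    (hQ : IsPmf Q) (hl : l ≤ 0) :
    ∫ x, ∑ j, wTilt ρ Q l x j * Real.logb 2 (wTilt ρ Q l x j / Q j) ∂P
      = (l * PhiF P ρ Q l - Lam P ρ Q l) / Real.log 2 := by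
  have e1 : ∀ x : ℝ, ∑ j, wTilt ρ Q l x j * Real.logb 2 (wTilt ρ Q l x j / Q j)
      = (l * psiF ρ Q l x - Real.log (Zf ρ Q l x)) / Real.log 2 := by
    intro x
    rw [wTilt_cost_pointwise hQ, wTilt_rho_sum hQ]
  rw [show (fun x => ∑ j, wTilt ρ Q l x j * Real.logb 2 (wTilt ρ Q l x j / Q j))
      = fun x => (l * psiF ρ Q l x - Real.log (Zf ρ Q l x)) / Real.log 2 from funext e1]
  rw [integral_div, integral_sub ((integrable_psiF hae hρmeas hρnn hρM hQ).const_mul l)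
    (integrable_logZf hae hρmeas hρnn hρM hQ hl), integral_const_mul, PhiF, Lam_eq]

lemma wTilt_distortion (hQ : IsPmf Q) :
    ∫ x, ∑ j, wTilt ρ Q l x j * ρ x j ∂P = PhiF P ρ Q l := by
  rw [show (fun x => ∑ j, wTilt ρ Q l x j * ρ x j) = fun x => psiF ρ Q l x from
    funext (wTilt_rho_sum hQ)]
  rfl

open Filter Topology in
lemma sum_abs_le_dist (Q Q' : Fin k → ℝ) : (∑ j, |Q j - Q' j|) ≤ k * dist Q Q' := by
  calc (∑ j, |Q j - Q' j|) ≤ ∑ _j : Fin k, dist Q Q' := by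
        refine Finset.sum_le_sum (fun j _ => ?_)
        rw [← Real.dist_eq]
        exact dist_le_pi_dist Q Q' j
    _ = k * dist Q Q' := by
        rw [Finset.sum_const, Finset.card_univ, Fintype.card_fin, nsmul_eq_mul]

open Filter Topology in
lemma Phi_tendsto (hae : ∀ᵐ x ∂P, x ∈ A) (hM : 0 ≤ M) (ha : a ≤ 0)
    (hρmeas : ∀ j, Measurable fun x => ρ x j)
    (hρnn : ∀ x ∈ A, ∀ j, 0 ≤ ρ x j) (hρM : ∀ x ∈ A, ∀ j, ρ x j ≤ M)
    {Qs : ℕ → Fin k → ℝ} {lsq : ℕ → ℝ} {Qinf : Fin k → ℝ} {linf : ℝ}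
    (hQs : ∀ n, IsPmf (Qs n)) (hQinf : IsPmf Qinf)
    (hlsq : ∀ n, lsq n ∈ Set.Icc a 0) (hlinf : linf ∈ Set.Icc a 0)
    (hQt : Tendsto Qs atTop (𝓝 Qinf)) (hlt : Tendsto lsq atTop (𝓝 linf)) :
    Tendsto (fun n => PhiF P ρ (Qs n) (lsq n)) atTop (𝓝 (PhiF P ρ Qinf linf)) := by
  rw [tendsto_iff_dist_tendsto_zero]
  set CC := (M + 1) ^ 2 * ((Real.exp (a * M))⁻¹ + ((Real.exp (a * M))⁻¹) ^ 2) with hCC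
  have hCC0 : 0 ≤ CC := by positivity
  refine squeeze_zero (fun n => dist_nonneg)
    (fun n => ?_) (g := fun n => CC * (k * dist (Qs n) Qinf + dist (lsq n) linf)) ?_
  · rw [Real.dist_eq]
    refine le_trans (Phi_diff hae hM ha hρmeas hρnn hρM (hQs n) hQinf (hlsq n) hlinf) ?_
    rw [← hCC]
    refine mul_le_mul_of_nonneg_left ?_ hCC0
    rw [Real.dist_eq]
    exact add_le_add (sum_abs_le_dist _ _) le_rfl
  · have h1 : Tendsto (fun n => dist (Qs n) Qinf) atTop (𝓝 0) :=
      tendsto_iff_dist_tendsto_zero.1 hQt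
    have h2 : Tendsto (fun n => dist (lsq n) linf) atTop (𝓝 0) :=
      tendsto_iff_dist_tendsto_zero.1 hlt
    have := (((h1.const_mul (k:ℝ)).add h2).const_mul CC)
    simpa using this

open Filter Topology in
lemma Lam_tendsto (hae : ∀ᵐ x ∂P, x ∈ A) (hM : 0 ≤ M) (ha : a ≤ 0)
    (hρmeas : ∀ j, Measurable fun x => ρ x j)
    (hρnn : ∀ x ∈ A, ∀ j, 0 ≤ ρ x j) (hρM : ∀ x ∈ A, ∀ j, ρ x j ≤ M)
    {Qs : ℕ → Fin k → ℝ} {lsq : ℕ → ℝ} {Qinf : Fin k → ℝ} {linf : ℝ}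
    (hQs : ∀ n, IsPmf (Qs n)) (hQinf : IsPmf Qinf)
    (hlsq : ∀ n, lsq n ∈ Set.Icc a 0) (hlinf : linf ∈ Set.Icc a 0)
    (hQt : Tendsto Qs atTop (𝓝 Qinf)) (hlt : Tendsto lsq atTop (𝓝 linf)) :
    Tendsto (fun n => Lam P ρ (Qs n) (lsq n)) atTop (𝓝 (Lam P ρ Qinf linf)) := by
  rw [tendsto_iff_dist_tendsto_zero]
  set CC := (Real.exp (a * M))⁻¹ with hCC
  have hCC0 : 0 ≤ CC := by positivity
  refine squeeze_zero (fun n => dist_nonneg)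
    (fun n => ?_) (g := fun n => CC * (k * dist (Qs n) Qinf + M * dist (lsq n) linf)) ?_
  · rw [Real.dist_eq]
    refine le_trans (Lam_diff hae hM ha hρmeas hρnn hρM (hQs n) hQinf (hlsq n) hlinf) ?_
    rw [← hCC]
    refine mul_le_mul_of_nonneg_left ?_ hCC0
    rw [Real.dist_eq]
    exact add_le_add (sum_abs_le_dist _ _)
      (mul_le_mul_of_nonneg_left le_rfl hM)
  · have h1 : Tendsto (fun n => dist (Qs n) Qinf) atTop (𝓝 0) :=
      tendsto_iff_dist_tendsto_zero.1 hQt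
    have h2 : Tendsto (fun n => dist (lsq n) linf) atTop (𝓝 0) :=
      tendsto_iff_dist_tendsto_zero.1 hlt
    have := (((h1.const_mul (k:ℝ)).add (h2.const_mul M)).const_mul CC)
    simpa using this


open Filter Topology in
lemma exists_good_Q (hk : 0 < k) (hae : ∀ᵐ x ∂P, x ∈ A) (hM : 0 ≤ M) (ha : a ≤ 0)
    (hρmeas : ∀ j, Measurable fun x => ρ x j)
    (hρnn : ∀ x ∈ A, ∀ j, 0 ≤ ρ x j) (hρM : ∀ x ∈ A, ∀ j, ρ x j ≤ M)
    {ls D : ℝ} (hls_neg : ls < 0) (hls_lb : a + 1 ≤ ls)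
    (hmax : ∀ l, l ≤ 0 → l * D - Gamma P ρ l ≤ ls * D - Gamma P ρ ls) :
    ∃ Qt : Fin k → ℝ, IsPmf Qt ∧ Lam P ρ Qt ls = Gamma P ρ ls ∧ PhiF P ρ Qt ls = D := by
  have hls_mem : ls ∈ Set.Icc a 0 := ⟨by linarith, hls_neg.le⟩
  have hbase : Tendsto (fun n : ℕ => ((n:ℝ) + 1)⁻¹) atTop (𝓝 0) := by
    simpa [one_div] using tendsto_one_div_add_atTop_nhds_zero_nat (𝕜 := ℝ)
  -- ===== LEFT: Q₁ with PhiF Q₁ ls ≤ D, Lam Q₁ ls = Gamma ls =====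
  have stepL : ∃ Q₁ : Fin k → ℝ, IsPmf Q₁ ∧ Lam P ρ Q₁ ls = Gamma P ρ ls
      ∧ PhiF P ρ Q₁ ls ≤ D := by
    set lft : ℕ → ℝ := fun n => ls - ((n:ℝ) + 1)⁻¹ with hlft
    have hlft_lt : ∀ n, lft n < ls := fun n => by
      simp only [hlft]; exact sub_lt_self _ (by positivity)
    have hlft_mem : ∀ n, lft n ∈ Set.Icc a 0 := by
      intro n
      have h1 : ((n:ℝ) + 1)⁻¹ ≤ 1 := by
        rw [inv_le_one_iff₀]; right; linarith [Nat.cast_nonneg (α := ℝ) n]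
      constructor
      · simp only [hlft]; linarith
      · linarith [hlft_lt n]
    choose Qn hQn hQnmax using fun n =>
      Gamma_attained hk hae hM ha hρmeas hρnn hρM (hlft_mem n)
    have hslope : ∀ n, ∃ c ∈ Set.Ioo (lft n) ls,
        PhiF P ρ (Qn n) c = (Lam P ρ (Qn n) ls - Lam P ρ (Qn n) (lft n)) / (ls - lft n) :=
      fun n => exists_slope hae hρmeas hρnn hρM (hQn n) (hlft_lt n) hls_neg.le
    choose ξ hξmem hξeq using hslope
    have hslope_le : ∀ n, PhiF P ρ (Qn n) (ξ n) ≤ D := by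
      intro n
      have c1 : Lam P ρ (Qn n) ls ≤ Gamma P ρ ls :=
        Lam_le_Gamma hae hρmeas hρnn hρM (hQn n) hls_neg.le
      have c2 := hQnmax n
      have c3 : Gamma P ρ ls - Gamma P ρ (lft n) ≤ (ls - lft n) * D := by
        have := hmax (lft n) (hlft_mem n).2
        nlinarith
      rw [hξeq n, div_le_iff₀ (by linarith [hlft_lt n])]
      nlinarith
    have hQmem : ∀ n, Qn n ∈ stdSimplex ℝ (Fin k) := fun n => ⟨(hQn n).1, (hQn n).2⟩
    obtain ⟨Q₁, hQ₁mem, φ, hφ, hQφ⟩ := (isCompact_stdSimplex ℝ (Fin k)).tendsto_subseq hQmem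
    have hQ₁ : IsPmf Q₁ := ⟨hQ₁mem.1, hQ₁mem.2⟩
    have hInv : Tendsto (fun n => ((φ n : ℝ) + 1)⁻¹) atTop (𝓝 0) := by
      refine squeeze_zero (fun n => by positivity) (fun n => ?_) hbase
      have hle : n ≤ φ n := hφ.le_apply
      have h1 : (n:ℝ) + 1 ≤ (φ n : ℝ) + 1 := by
        have h2 := (Nat.cast_le (α := ℝ)).2 hle; linarith
      exact inv_anti₀ (by positivity) h1
    have hlfttend : Tendsto (fun n => lft (φ n)) atTop (𝓝 ls) := by
      have h3 : Tendsto (fun n : ℕ => ls - ((φ n : ℝ) + 1)⁻¹) atTop (𝓝 (ls - 0)) :=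
        Filter.Tendsto.sub tendsto_const_nhds hInv
      simpa [hlft] using h3
    have hξtend : Tendsto (fun n => ξ (φ n)) atTop (𝓝 ls) :=
      tendsto_of_tendsto_of_tendsto_of_le_of_le hlfttend tendsto_const_nhds
        (fun n => (hξmem (φ n)).1.le) (fun n => (hξmem (φ n)).2.le)
    have hξmem' : ∀ n, ξ (φ n) ∈ Set.Icc a 0 :=
      fun n => ⟨le_trans (hlft_mem (φ n)).1 (hξmem (φ n)).1.le,
        (hξmem (φ n)).2.le.trans hls_neg.le⟩
    have hPhitend := Phi_tendsto hae hM ha hρmeas hρnn hρM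
      (fun n => hQn (φ n)) hQ₁ hξmem' hls_mem hQφ hξtend
    have hPhile : PhiF P ρ Q₁ ls ≤ D :=
      le_of_tendsto hPhitend (Filter.Eventually.of_forall fun n => hslope_le (φ n))
    have hLamtend := Lam_tendsto hae hM ha hρmeas hρnn hρM
      (fun n => hQn (φ n)) hQ₁ (fun n => hlft_mem (φ n)) hls_mem hQφ hlfttend
    have hGamtend : Tendsto (fun n => Lam P ρ (Qn (φ n)) (lft (φ n))) atTop
        (𝓝 (Gamma P ρ ls)) := by
      rw [show (fun n => Lam P ρ (Qn (φ n)) (lft (φ n)))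
          = fun n => Gamma P ρ (lft (φ n)) from funext fun n => hQnmax (φ n)]
      rw [tendsto_iff_dist_tendsto_zero]
      refine squeeze_zero (fun n => dist_nonneg) (fun n => ?_)
        (g := fun n => (Real.exp (a * M))⁻¹ * M * dist (lft (φ n)) ls) ?_
      · simp only [Real.dist_eq]
        exact Gamma_dist_le hk hae hM ha hρmeas hρnn hρM (hlft_mem (φ n)) hls_mem
      · have := (tendsto_iff_dist_tendsto_zero.1 hlfttend).const_mul
          ((Real.exp (a * M))⁻¹ * M)
        simpa using this
    exact ⟨Q₁, hQ₁, tendsto_nhds_unique hLamtend hGamtend, hPhile⟩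
  -- ===== RIGHT: Q₂ with PhiF Q₂ ls ≥ D, Lam Q₂ ls = Gamma ls =====
  have stepR : ∃ Q₂ : Fin k → ℝ, IsPmf Q₂ ∧ Lam P ρ Q₂ ls = Gamma P ρ ls
      ∧ D ≤ PhiF P ρ Q₂ ls := by
    set rgt : ℕ → ℝ := fun n => ls + (-ls) * ((n:ℝ) + 2)⁻¹ with hrgt
    have hls_pos : 0 < -ls := by linarith
    have hrgt_gt : ∀ n, ls < rgt n := fun n => by
      simp only [hrgt]; nlinarith [inv_pos.2 (show (0:ℝ) < (n:ℝ) + 2 by positivity)]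
    have hrgt_mem : ∀ n, rgt n ∈ Set.Icc a 0 := by
      intro n
      have h1 : ((n:ℝ) + 2)⁻¹ ≤ 1 := by
        rw [inv_le_one_iff₀]; right; linarith [Nat.cast_nonneg (α := ℝ) n]
      have h2 : (0:ℝ) < ((n:ℝ) + 2)⁻¹ := by positivity
      constructor
      · have := hrgt_gt n; linarith
      · simp only [hrgt]; nlinarith
    choose Qn hQn hQnmax using fun n =>
      Gamma_attained hk hae hM ha hρmeas hρnn hρM (hrgt_mem n)
    have hslope : ∀ n, ∃ c ∈ Set.Ioo ls (rgt n),
        PhiF P ρ (Qn n) c = (Lam P ρ (Qn n) (rgt n) - Lam P ρ (Qn n) ls) / (rgt n - ls) :=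
      fun n => exists_slope hae hρmeas hρnn hρM (hQn n) (hrgt_gt n) (hrgt_mem n).2
    choose ξ hξmem hξeq using hslope
    have hslope_ge : ∀ n, D ≤ PhiF P ρ (Qn n) (ξ n) := by
      intro n
      have c1 : Lam P ρ (Qn n) ls ≤ Gamma P ρ ls :=
        Lam_le_Gamma hae hρmeas hρnn hρM (hQn n) hls_neg.le
      have c2 := hQnmax n
      have c3 : (rgt n - ls) * D ≤ Gamma P ρ (rgt n) - Gamma P ρ ls := by
        have := hmax (rgt n) (hrgt_mem n).2
        nlinarith
      rw [hξeq n, le_div_iff₀ (by linarith [hrgt_gt n])]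
      nlinarith
    have hQmem : ∀ n, Qn n ∈ stdSimplex ℝ (Fin k) := fun n => ⟨(hQn n).1, (hQn n).2⟩
    obtain ⟨Q₂, hQ₂mem, φ, hφ, hQφ⟩ := (isCompact_stdSimplex ℝ (Fin k)).tendsto_subseq hQmem
    have hQ₂ : IsPmf Q₂ := ⟨hQ₂mem.1, hQ₂mem.2⟩
    have hInv : Tendsto (fun n => ((φ n : ℝ) + 2)⁻¹) atTop (𝓝 0) := by
      refine squeeze_zero (fun n => by positivity) (fun n => ?_) hbase
      have hle : n ≤ φ n := hφ.le_apply
      have h1 : (n:ℝ) + 1 ≤ (φ n : ℝ) + 2 := by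
        have h2 := (Nat.cast_le (α := ℝ)).2 hle; linarith
      exact inv_anti₀ (by positivity) h1
    have hrgttend : Tendsto (fun n => rgt (φ n)) atTop (𝓝 ls) := by
      have h2 := hInv.const_mul (-ls)
      have h3 : Tendsto (fun n : ℕ => ls + (-ls) * ((φ n : ℝ) + 2)⁻¹) atTop
          (𝓝 (ls + (-ls) * 0)) := Filter.Tendsto.add tendsto_const_nhds h2
      simpa [hrgt] using h3
    have hξtend : Tendsto (fun n => ξ (φ n)) atTop (𝓝 ls) :=
      tendsto_of_tendsto_of_tendsto_of_le_of_le tendsto_const_nhds hrgttend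
        (fun n => (hξmem (φ n)).1.le) (fun n => (hξmem (φ n)).2.le)
    have hξmem' : ∀ n, ξ (φ n) ∈ Set.Icc a 0 :=
      fun n => ⟨le_trans hls_mem.1 (hξmem (φ n)).1.le,
        (hξmem (φ n)).2.le.trans (hrgt_mem (φ n)).2⟩
    have hPhitend := Phi_tendsto hae hM ha hρmeas hρnn hρM
      (fun n => hQn (φ n)) hQ₂ hξmem' hls_mem hQφ hξtend
    have hPhige : D ≤ PhiF P ρ Q₂ ls :=
      ge_of_tendsto hPhitend (Filter.Eventually.of_forall fun n => hslope_ge (φ n))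
    have hLamtend := Lam_tendsto hae hM ha hρmeas hρnn hρM
      (fun n => hQn (φ n)) hQ₂ (fun n => hrgt_mem (φ n)) hls_mem hQφ hrgttend
    have hGamtend : Tendsto (fun n => Lam P ρ (Qn (φ n)) (rgt (φ n))) atTop
        (𝓝 (Gamma P ρ ls)) := by
      rw [show (fun n => Lam P ρ (Qn (φ n)) (rgt (φ n)))
          = fun n => Gamma P ρ (rgt (φ n)) from funext fun n => hQnmax (φ n)]
      rw [tendsto_iff_dist_tendsto_zero]
      refine squeeze_zero (fun n => dist_nonneg) (fun n => ?_)
        (g := fun n => (Real.exp (a * M))⁻¹ * M * dist (rgt (φ n)) ls) ?_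
      · simp only [Real.dist_eq]
        exact Gamma_dist_le hk hae hM ha hρmeas hρnn hρM (hrgt_mem (φ n)) hls_mem
      · have := (tendsto_iff_dist_tendsto_zero.1 hrgttend).const_mul
          ((Real.exp (a * M))⁻¹ * M)
        simpa using this
    exact ⟨Q₂, hQ₂, tendsto_nhds_unique hLamtend hGamtend, hPhige⟩
  -- ===== MIXTURE + IVT =====
  obtain ⟨Q₁, hQ₁, hQ₁max, hQ₁le⟩ := stepL
  obtain ⟨Q₂, hQ₂, hQ₂max, hQ₂ge⟩ := stepR
  set Qmix : ℝ → Fin k → ℝ := fun t j => (1 - t) * Q₁ j + t * Q₂ j with hQmix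
  have hQmix_pmf : ∀ t ∈ Set.Icc (0:ℝ) 1, IsPmf (Qmix t) := by
    intro t ht
    constructor
    · intro j
      have := hQ₁.1 j; have := hQ₂.1 j
      have h1 : 0 ≤ 1 - t := by linarith [ht.2]
      have h2 : 0 ≤ t := ht.1
      positivity
    · simp only [hQmix]
      rw [Finset.sum_add_distrib, ← Finset.mul_sum, ← Finset.mul_sum, hQ₁.2, hQ₂.2]
      ring
  have hQmix_max : ∀ t ∈ Set.Icc (0:ℝ) 1, Lam P ρ (Qmix t) ls = Gamma P ρ ls := by
    intro t ht
    refine le_antisymm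
      (Lam_le_Gamma hae hρmeas hρnn hρM (hQmix_pmf t ht) hls_neg.le) ?_
    have key : ∀ x : ℝ, (1 - t) * Real.log (Zf ρ Q₁ ls x) + t * Real.log (Zf ρ Q₂ ls x)
        ≤ Real.log (Zf ρ (Qmix t) ls x) := by
      intro x
      have hZeq : Zf ρ (Qmix t) ls x = (1 - t) * Zf ρ Q₁ ls x + t * Zf ρ Q₂ ls x := by
        simp only [hQmix, Zf]
        rw [Finset.mul_sum, Finset.mul_sum, ← Finset.sum_add_distrib]
        exact Finset.sum_congr rfl fun j _ => by ring
      rw [hZeq]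
      have := (strictConcaveOn_log_Ioi.concaveOn).2
        (Set.mem_Ioi.2 (Zf_pos (ρ := ρ) (Q := Q₁) (l := ls) (x := x) hQ₁))
        (Set.mem_Ioi.2 (Zf_pos (ρ := ρ) (Q := Q₂) (l := ls) (x := x) hQ₂))
        (by linarith [ht.2] : (0:ℝ) ≤ 1 - t) ht.1 (by ring)
      simpa [smul_eq_mul] using this
    have i1 := (integrable_logZf hae hρmeas hρnn hρM hQ₁ hls_neg.le).const_mul (1-t)
    have i2 := (integrable_logZf hae hρmeas hρnn hρM hQ₂ hls_neg.le).const_mul t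
    have i12 : Integrable (fun x => (1-t) * Real.log (Zf ρ Q₁ ls x)
        + t * Real.log (Zf ρ Q₂ ls x)) P := i1.add i2
    have hint := integral_mono_ae i12
      (integrable_logZf hae hρmeas hρnn hρM (hQmix_pmf t ht) hls_neg.le)
      (Filter.Eventually.of_forall key)
    rw [Lam_eq]
    calc Gamma P ρ ls = (1 - t) * Lam P ρ Q₁ ls + t * Lam P ρ Q₂ ls := by
          rw [hQ₁max, hQ₂max]; ring
      _ = ∫ x, ((1-t) * Real.log (Zf ρ Q₁ ls x) + t * Real.log (Zf ρ Q₂ ls x)) ∂P := by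
          rw [integral_add i1 i2, integral_const_mul, integral_const_mul]; rfl
      _ ≤ _ := hint
  -- continuity of t ↦ PhiF (Qmix t) ls on [0,1]
  have hcont : ContinuousOn (fun t => PhiF P ρ (Qmix t) ls) (Set.Icc (0:ℝ) 1) := by
    set CC := (M + 1) ^ 2 * ((Real.exp (a * M))⁻¹ + ((Real.exp (a * M))⁻¹) ^ 2) with hCC
    refine LipschitzOnWith.continuousOn (K := (CC * 2).toNNReal)
      (LipschitzOnWith.of_dist_le_mul (fun t ht s hs => ?_))
    have h1 := Phi_diff hae hM ha hρmeas hρnn hρM (hQmix_pmf t ht) (hQmix_pmf s hs)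
      hls_mem hls_mem
    simp only [sub_self, abs_zero, add_zero] at h1
    have h2 : (∑ j, |Qmix t j - Qmix s j|) ≤ |t - s| * 2 := by
      have e1 : ∀ j : Fin k, |Qmix t j - Qmix s j| = |t - s| * |Q₂ j - Q₁ j| := by
        intro j
        rw [← abs_mul]
        congr 1
        simp only [hQmix]; ring
      rw [Finset.sum_congr rfl (fun j _ => e1 j), ← Finset.mul_sum]
      refine mul_le_mul_of_nonneg_left ?_ (abs_nonneg _)
      calc (∑ j, |Q₂ j - Q₁ j|) ≤ ∑ j, (Q₂ j + Q₁ j) := by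
            refine Finset.sum_le_sum (fun j _ => ?_)
            have h3 := hQ₁.1 j; have h4 := hQ₂.1 j
            rw [abs_le]; constructor <;> linarith
        _ = 2 := by rw [Finset.sum_add_distrib, hQ₂.2, hQ₁.2]; norm_num
    rw [Real.dist_eq]
    calc |PhiF P ρ (Qmix t) ls - PhiF P ρ (Qmix s) ls|
        ≤ CC * (∑ j, |Qmix t j - Qmix s j|) := h1
      _ ≤ CC * (|t - s| * 2) := mul_le_mul_of_nonneg_left h2 (by positivity)
      _ = (CC * 2) * dist t s := by rw [Real.dist_eq]; ring
      _ = ((CC * 2).toNNReal : ℝ) * dist t s := by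
          rw [Real.coe_toNNReal _ (by positivity)]
  have hIVT := intermediate_value_Icc (by norm_num : (0:ℝ) ≤ 1) hcont
  have hD_mem : D ∈ Set.Icc (PhiF P ρ (Qmix 0) ls) (PhiF P ρ (Qmix 1) ls) := by
    have e0 : Qmix 0 = Q₁ := by funext j; simp [hQmix]
    have e1 : Qmix 1 = Q₂ := by funext j; simp [hQmix]
    rw [e0, e1]
    exact ⟨hQ₁le, hQ₂ge⟩
  obtain ⟨t, htmem, hteq⟩ := hIVT hD_mem
  exact ⟨Qmix t, hQmix_pmf t htmem, hQmix_max t htmem, hteq⟩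

end Main

/-- **Lemma 2(i).** For every `D ∈ (0, D_max)`,
`(ln 2)·R(D) = sup_{λ ≤ 0} [λ·D − Γ(λ)]`. -/
theorem stmt_15 {k : ℕ} (hk : 0 < k) (A : Set ℝ) (hA : MeasurableSet A)
    (P : Measure ℝ) [IsProbabilityMeasure P] (hsupp : P Aᶜ = 0)
    (M : ℝ) (ρ : ℝ → Fin k → ℝ) (hρmeas : ∀ j, Measurable fun x => ρ x j)
    (hρnn : ∀ x ∈ A, ∀ j, 0 ≤ ρ x j) (hρM : ∀ x ∈ A, ∀ j, ρ x j ≤ M)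
    (hρmin : ∀ x ∈ A, ∃ j, ρ x j = 0)
    (hDmax : 0 < Dmax P ρ) :
    ∀ D : ℝ, 0 < D → D < Dmax P ρ →
      (Real.log 2 : EReal) * RofD P ρ D
        = ⨆ l ∈ Set.Iic (0 : ℝ), ((l * D - Gamma P ρ l : ℝ) : EReal) := by
  intro D hD0 hDlt
  have hlog2 : (0:ℝ) < Real.log 2 := Real.log_pos (by norm_num)
  have hae : ∀ᵐ x ∂P, x ∈ A := by
    rw [MeasureTheory.ae_iff]; exact hsupp
  have hAne : A.Nonempty := by
    by_contra h
    rw [Set.not_nonempty_iff_eq_empty] at h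
    rw [h, Set.compl_empty, measure_univ] at hsupp
    exact one_ne_zero hsupp
  obtain ⟨x₀, hx₀⟩ := hAne
  have hM : 0 ≤ M := le_trans (hρnn x₀ hx₀ ⟨0, hk⟩) (hρM x₀ hx₀ ⟨0, hk⟩)
  -- the special point l₀ where f is positive
  have hd1 : 0 < (Dmax P ρ - D) / (M^2 + 1) := by
    apply div_pos (by linarith) (by positivity)
  have hd2 : (0:ℝ) < 1/(M+1) := by positivity
  set m : ℝ := min ((Dmax P ρ - D) / (M^2 + 1)) (1/(M+1)) with hm
  have hm0 : 0 < m := lt_min hd1 hd2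
  set l₀ : ℝ := -m with hl₀
  have hl₀neg : l₀ < 0 := by rw [hl₀]; linarith
  have hl₀M : |l₀| * M ≤ 1 := by
    rw [hl₀, abs_neg, abs_of_pos hm0]
    have h3 : m ≤ 1/(M+1) := min_le_right _ _
    calc m * M ≤ (1/(M+1)) * M := mul_le_mul_of_nonneg_right h3 hM
      _ ≤ 1 := by rw [div_mul_eq_mul_div, div_le_one (by linarith)]; linarith
  have hquad : Gamma P ρ l₀ ≤ l₀ * Dmax P ρ + l₀^2 * M^2 := by
    refine Gamma_le hk (fun Q hQ => ?_)
    have h1 := Lam_le_quad hae hM hρmeas hρnn hρM hQ hl₀neg.le hl₀M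
    have h2 : l₀ * DmaxPQ P ρ Q ≤ l₀ * Dmax P ρ :=
      mul_le_mul_of_nonpos_left (Dmax_le_DmaxPQ hρmeas hQ) hl₀neg.le
    linarith
  have hfl₀ : 0 < l₀ * D - Gamma P ρ l₀ := by
    have hm1 : m ≤ (Dmax P ρ - D) / (M^2 + 1) := min_le_left _ _
    have hm2 : m * (M^2 + 1) ≤ Dmax P ρ - D := by
      rw [← le_div_iff₀ (by positivity : (0:ℝ) < M^2 + 1)]; exact hm1
    have he : l₀ * D - (l₀ * Dmax P ρ + l₀^2 * M^2) = m * (Dmax P ρ - D) - m^2 * M^2 := by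
      rw [hl₀]; ring
    nlinarith [sq_nonneg m, mul_pos hm0 hm0]
  -- T and the max point ls
  set T : ℝ := max (Real.log k / D) (-l₀) with hT
  have hTlog : Real.log k / D ≤ T := le_max_left _ _
  have hTl₀ : -l₀ ≤ T := le_max_right _ _
  have hT0 : 0 ≤ T := le_trans (by linarith) hTl₀
  set aa : ℝ := -(T + 1) with haa_def
  have haa : aa ≤ 0 := by rw [haa_def]; linarith
  have hsubset : Set.Icc (-T) (0:ℝ) ⊆ Set.Icc aa 0 := by
    intro l hl
    exact ⟨by rw [haa_def]; linarith [hl.1], hl.2⟩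
  have hfc : ContinuousOn (fun l => l * D - Gamma P ρ l) (Set.Icc (-T) 0) := by
    refine LipschitzOnWith.continuousOn
      (K := (|D| + (Real.exp (aa * M))⁻¹ * M).toNNReal)
      (LipschitzOnWith.of_dist_le_mul (fun l hl l' hl' => ?_))
    have h1 := Gamma_dist_le hk hae hM haa hρmeas hρnn hρM (hsubset hl) (hsubset hl')
    rw [Real.dist_eq, Real.dist_eq]
    have h2 : |(l * D - Gamma P ρ l) - (l' * D - Gamma P ρ l')|
        ≤ |(l - l') * D| + |Gamma P ρ l - Gamma P ρ l'| := by
      calc |(l * D - Gamma P ρ l) - (l' * D - Gamma P ρ l')|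
          = |(l - l') * D - (Gamma P ρ l - Gamma P ρ l')| := by ring_nf
        _ ≤ _ := abs_sub _ _
    calc |(l * D - Gamma P ρ l) - (l' * D - Gamma P ρ l')|
        ≤ |(l - l') * D| + |Gamma P ρ l - Gamma P ρ l'| := h2
      _ ≤ |D| * |l - l'| + (Real.exp (aa * M))⁻¹ * M * |l - l'| := by
          rw [abs_mul, mul_comm |l - l'| |D|]
          exact add_le_add le_rfl h1
      _ = (|D| + (Real.exp (aa * M))⁻¹ * M) * |l - l'| := by ring
      _ = ((|D| + (Real.exp (aa * M))⁻¹ * M).toNNReal : ℝ) * |l - l'| := by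
          rw [Real.coe_toNNReal _ (by positivity)]
  have hl₀mem : l₀ ∈ Set.Icc (-T) (0:ℝ) := ⟨by linarith, hl₀neg.le⟩
  obtain ⟨ls, hlsmem, hlsmax⟩ :=
    (isCompact_Icc : IsCompact (Set.Icc (-T) (0:ℝ))).exists_isMaxOn ⟨l₀, hl₀mem⟩ hfc
  have hlsmax' : ∀ l ∈ Set.Icc (-T) (0:ℝ),
      l * D - Gamma P ρ l ≤ ls * D - Gamma P ρ ls := fun l hl => hlsmax hl
  have hls0 : ls ≤ 0 := hlsmem.2
  have hfls : 0 < ls * D - Gamma P ρ ls := lt_of_lt_of_le hfl₀ (hlsmax' l₀ hl₀mem)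
  have hglobal : ∀ l ≤ (0:ℝ), l * D - Gamma P ρ l ≤ ls * D - Gamma P ρ ls := by
    intro l hl
    rcases le_or_gt (-T) l with h | h
    · exact hlsmax' l ⟨h, hl⟩
    · have h1 := neg_logk_le_Gamma hk hae hρmeas hρnn hρM hρmin hl
      have h2 : l * D < -T * D := mul_lt_mul_of_pos_right h hD0
      have h3 : Real.log k ≤ T * D := by
        rw [← div_le_iff₀ hD0]; exact hTlog
      nlinarith
  have hlsneg : ls < 0 := by
    rcases lt_or_eq_of_le hls0 with h | h
    · exact h
    · exfalso
      rw [h] at hfls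
      rw [Gamma_zero hk] at hfls
      simp at hfls
  have hlslb : aa + 1 ≤ ls := by
    rw [haa_def]
    have := hlsmem.1
    linarith
  obtain ⟨Qt, hQt, hQtmax, hQtphi⟩ :=
    exists_good_Q hk hae hM haa hρmeas hρnn hρM hlsneg hlslb hglobal
  -- the optimal kernel
  set w : ℝ → Fin k → ℝ := wTilt ρ Qt ls with hw
  have hwmem : w ∈ {w : ℝ → Fin k → ℝ | Measurable w ∧ (∀ x j, 0 ≤ w x j) ∧
      (∀ x, ∑ j, w x j = 1) ∧ ∫ x, ∑ j, w x j * ρ x j ∂P ≤ D} := by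
    refine ⟨wTilt_measurable hρmeas, fun x j => wTilt_nonneg hQt x j,
      fun x => wTilt_sum hQt x, ?_⟩
    rw [hw, wTilt_distortion hQt, hQtphi]
  have hcost : wCost P Qt w = (((ls * D - Gamma P ρ ls) / Real.log 2 : ℝ) : EReal) := by
    rw [wCost, if_pos (Filter.Eventually.of_forall fun x j hj => wTilt_supp hQt x j hj)]
    refine EReal.coe_eq_coe_iff.2 ?_
    rw [hw]
    rw [wTilt_cost_integral hae hρmeas hρnn hρM hQt hlsneg.le, hQtphi, hQtmax]
  set S : ℝ := ls * D - Gamma P ρ ls with hS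
  have hRle : RofD P ρ D ≤ ((S / Real.log 2 : ℝ) : EReal) := by
    refine iInf₂_le_of_le Qt hQt (iInf₂_le_of_le w hwmem (le_of_eq hcost))
  have hRge : ((S / Real.log 2 : ℝ) : EReal) ≤ RofD P ρ D := by
    refine le_iInf₂ fun Q hQ => le_iInf₂ fun v hv => ?_
    rw [wCost]
    split_ifs with hcond
    · rw [EReal.coe_le_coe_iff]
      obtain ⟨hvm, hv0, hv1, hvD⟩ := hv
      have h1 := partA hae hρmeas hρnn hρM hQ hvm hv0 hv1 hcond hlsneg.le hvD
      have h2 : Lam P ρ Q ls ≤ Gamma P ρ ls :=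
        Lam_le_Gamma hae hρmeas hρnn hρM hQ hlsneg.le
      rw [div_le_iff₀ hlog2, hS]
      nlinarith
    · exact le_top
  have hR : RofD P ρ D = ((S / Real.log 2 : ℝ) : EReal) := le_antisymm hRle hRge
  have hsup : (⨆ l ∈ Set.Iic (0:ℝ), ((l * D - Gamma P ρ l : ℝ) : EReal)) = (S : EReal) := by
    apply le_antisymm
    · exact iSup₂_le fun l hl => EReal.coe_le_coe_iff.2 (hglobal l hl)
    · exact le_iSup₂_of_le ls (Set.mem_Iic.2 hls0) (by rw [hS])
  rw [hR, hsup, ← EReal.coe_mul]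
  refine EReal.coe_eq_coe_iff.2 ?_
  field_simp
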